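/- arXiv:1306.4354 — 4 statements merged into one kernel-verified Lean document; each statement's English description precedes it below -/
import Mathlib

section
/- Let T be a multilinear form on a real vector space with argument groups including three arguments j₁, j₂, j₃ in which T is totally symmetric, and suppose T satisfies the cyclic identity T(j₁,j₂,j₃; c,d, ...) + T(j₁,j₂,d; j₃,c, ...) + T(j₁,j₂,c; d,j₃, ...) = 0 where the semicolon separates a pair (c,d) in which T is symmetric. Then 3·T(j₁,j₂,j₃; c,d,...) equals the sum of three terms obtained by the interchange symmetry, and if additionally T is invariant under interchanging the pair (j₁,j₂) with the pair (c,d), then T = 0. -/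
/-- Let `T` be a tensor with components `T j₁ j₂ j₃ c d r`
(with `r` a group of spectator indices), totally symmetric in `j₁, j₂, j₃` and
symmetric in the pair `c, d`, satisfying the cyclic identity
`T(j₁,j₂,j₃;c,d) + T(j₁,j₂,d;j₃,c) + T(j₁,j₂,c;d,j₃) = 0`.
Then `3·T(j₁,j₂,j₃;c,d)` equals the sum of the three terms obtained by the
interchange symmetry, and if moreover `T` is invariant under interchanging the
pair `(j₁,j₂)` with the pair `(c,d)`, then `T = 0`. -/
theorem three_symmetric_indices_identity
    {ι σ : Type*} (T : ι → ι → ι → ι → ι → σ → ℝ)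
    (hj₁₂ : ∀ j₁ j₂ j₃ c d r, T j₁ j₂ j₃ c d r = T j₂ j₁ j₃ c d r)
    (hj₂₃ : ∀ j₁ j₂ j₃ c d r, T j₁ j₂ j₃ c d r = T j₁ j₃ j₂ c d r)
    (hcd : ∀ j₁ j₂ j₃ c d r, T j₁ j₂ j₃ c d r = T j₁ j₂ j₃ d c r)
    (hcyc : ∀ j₁ j₂ j₃ c d r,
      T j₁ j₂ j₃ c d r + T j₁ j₂ d j₃ c r + T j₁ j₂ c d j₃ r = 0) :
    (∀ j₁ j₂ j₃ c d r,
      (∀ j₁' j₂' j₃' c' d' r', T j₁' j₂' j₃' c' d' r' = T c' d' j₃' j₁' j₂' r') →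
        3 * T j₁ j₂ j₃ c d r =
          T c d j₃ j₁ j₂ r + T c d j₂ j₃ j₁ r + T c d j₁ j₂ j₃ r) ∧
    ((∀ j₁ j₂ j₃ c d r, T j₁ j₂ j₃ c d r = T c d j₃ j₁ j₂ r) →
      ∀ j₁ j₂ j₃ c d r, T j₁ j₂ j₃ c d r = 0) := by
  -- the triple is totally symmetric: cyclic rotation
  have hrot : ∀ j₁ j₂ j₃ c d r, T j₁ j₂ j₃ c d r = T j₃ j₁ j₂ c d r := by
    intro j₁ j₂ j₃ c d r
    rw [hj₂₃, hj₁₂]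
  constructor
  · intro j₁ j₂ j₃ c d r h
    have h1 : T c d j₃ j₁ j₂ r = T j₁ j₂ j₃ c d r := (h j₁ j₂ j₃ c d r).symm
    have h2 : T c d j₂ j₃ j₁ r = T j₁ j₂ j₃ c d r := by
      rw [← h j₃ j₁ j₂ c d r, ← hrot]
    have h3 : T c d j₁ j₂ j₃ r = T j₁ j₂ j₃ c d r := by
      rw [← h j₂ j₃ j₁ c d r, hrot]
    rw [h1, h2, h3]; ring
  · intro h j₁ j₂ j₃ c d r
    -- second cyclic term equals the first
    have e2 : T j₁ j₂ d j₃ c r = T j₁ j₂ j₃ c d r := by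
      rw [h j₁ j₂ d j₃ c r, hrot, hrot, ← h j₁ j₂ j₃ c d r]
    -- third cyclic term equals the first
    have e3 : T j₁ j₂ c d j₃ r = T j₁ j₂ j₃ c d r := by
      rw [h j₁ j₂ c d j₃ r, hrot, ← h j₁ j₂ j₃ c d r]
    have := hcyc j₁ j₂ j₃ c d r
    linarith
end

section
/- Let (V, g) be a finite-dimensional real vector space with a nondegenerate symmetric bilinear form, and O(g) its orthogonal group. For every p ≥ 1, the space of O(g)-invariant elements of Λ^p V is zero. -/
/-- Let `(V, g)` be a finite-dimensional real vector space
with a nondegenerate symmetric bilinear form, and `O(g)` its orthogonal group.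
For every `p ≥ 1`, the only `O(g)`-invariant element of `Λ^p V` is zero. -/
theorem invariant_exterior_power_eq_zero
    {V : Type*} [AddCommGroup V] [Module ℝ V] [FiniteDimensional ℝ V]
    (g : V →ₗ[ℝ] V →ₗ[ℝ] ℝ)
    (hsymm : ∀ v w, g v w = g w v)
    (hnd : ∀ v, (∀ w, g v w = 0) → v = 0)
    (p : ℕ) (hp : 1 ≤ p)
    (ω : ExteriorAlgebra ℝ V) (hω : ω ∈ ⋀[ℝ]^p V)
    (hinv : ∀ A : V ≃ₗ[ℝ] V, (∀ v w, g (A v) (A w) = g v w) →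
      ExteriorAlgebra.map A.toLinearMap ω = ω) :
    ω = 0 := by
  classical
  set n := Module.finrank ℝ V with hn
  -- an orthogonal basis for g
  obtain ⟨b, hb⟩ := LinearMap.BilinForm.exists_orthogonal_basis
    (B := g) ⟨fun x y => by simp [hsymm x y]⟩
  -- sign functions
  set sgn : Fin n → Fin n → ℝ := fun i j => if j = i then -1 else 1 with hsgn
  have hsgn_sq : ∀ i j, sgn i j * sgn i j = 1 := by
    intro i j; by_cases h : j = i <;> simp [hsgn, h]
  -- the reflections
  set f : Fin n → (V →ₗ[ℝ] V) := fun i => b.constr ℝ (fun j => sgn i j • b j) with hf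
  have hfb : ∀ i j, f i (b j) = sgn i j • b j := by
    intro i j; simp [hf, Module.Basis.constr_basis]
  have hinvol : ∀ i, Function.Involutive (f i) := by
    intro i
    have : (f i) ∘ₗ (f i) = LinearMap.id := by
      apply b.ext
      intro j
      simp [hfb, map_smul, smul_smul, hsgn_sq]
    intro x
    have := LinearMap.congr_fun this x
    simpa using this
  set A : Fin n → (V ≃ₗ[ℝ] V) := fun i => LinearEquiv.ofInvolutive (f i) (hinvol i) with hA
  have hAb : ∀ i j, (A i) (b j) = sgn i j • b j := fun i j => hfb i j
  -- orthogonality of the reflections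
  have horth : ∀ i, ∀ v w, g ((A i) v) ((A i) w) = g v w := by
    intro i
    have key : (g.compl₁₂ (A i).toLinearMap (A i).toLinearMap) = g := by
      apply b.ext; intro j
      apply b.ext; intro k
      simp only [LinearMap.compl₁₂_apply, LinearEquiv.coe_coe, hAb, map_smul,
        LinearMap.smul_apply, smul_eq_mul]
      by_cases hjk : j = k
      · subst hjk; rw [← mul_assoc, hsgn_sq, one_mul]
      · rw [show g (b j) (b k) = 0 from hb hjk]; ring
    intro v w
    have := LinearMap.congr_fun (LinearMap.congr_fun key v) w
    simpa using this
  -- the averaging operators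
  set T : Fin n → Module.End ℝ (ExteriorAlgebra ℝ V) := fun i =>
    (2⁻¹ : ℝ) • (LinearMap.id + (ExteriorAlgebra.map (A i).toLinearMap).toLinearMap) with hT
  have hTapply : ∀ i x, T i x =
      (2⁻¹ : ℝ) • (x + ExteriorAlgebra.map (A i).toLinearMap x) := by
    intro i x; simp [hT]
  -- products of T's act as scalars on scalar eigenvectors
  have hscal : ∀ (l : List (Fin n)) (x : ExteriorAlgebra ℝ V) (c : Fin n → ℝ),
      (∀ i, T i x = c i • x) → ((l.map T).prod) x = (l.map c).prod • x := by
    intro l x c hc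
    induction l with
    | nil => simp
    | cons i l ih =>
        rw [List.map_cons, List.prod_cons, Module.End.mul_apply, ih,
          List.map_cons, List.prod_cons, map_smul, hc i, smul_smul, mul_comm]
  -- the product of all the T's
  set Φ : Module.End ℝ (ExteriorAlgebra ℝ V) := ((List.finRange n).map T).prod with hΦ
  -- Φ fixes ω
  have hTω : ∀ i, T i ω = ω := by
    intro i
    rw [hTapply, hinv (A i) (horth i), ← two_smul ℝ, smul_smul,
      inv_mul_cancel₀ (two_ne_zero), one_smul]
  have hfix : Φ ω = ω := by
    rw [hΦ]
    generalize List.finRange n = l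
    induction l with
    | nil => simp
    | cons i l ih => rw [List.map_cons, List.prod_cons, Module.End.mul_apply, ih, hTω]
  -- Φ kills the p-th exterior power
  have hkill : ∀ x ∈ ⋀[ℝ]^p V, Φ x = 0 := by
    intro x hx
    rw [← ExteriorAlgebra.ιMulti_span_fixedDegree] at hx
    induction hx using Submodule.span_induction with
    | mem x hx =>
        obtain ⟨v, rfl⟩ := hx
        -- expand in the basis
        have hexp : ExteriorAlgebra.ιMulti ℝ p v =
            ∑ r : Fin p → Fin n, (∏ k, b.repr (v k) (r k)) •
              ExteriorAlgebra.ιMulti ℝ p (fun k => b (r k)) := by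
          have h1 := MultilinearMap.map_sum
            (f := (ExteriorAlgebra.ιMulti ℝ p).toMultilinearMap)
            (g := fun k j => b.repr (v k) j • b j)
          rw [show (fun k => ∑ j, b.repr (v k) j • b j) = v from
            funext fun k => b.sum_repr (v k)] at h1
          rw [show ExteriorAlgebra.ιMulti ℝ p v =
            (ExteriorAlgebra.ιMulti ℝ p).toMultilinearMap v from rfl, h1]
          refine Finset.sum_congr rfl fun r _ => ?_
          exact MultilinearMap.map_smul_univ _ _ _
        rw [hexp, map_sum]
        refine Finset.sum_eq_zero fun r _ => ?_
        rw [map_smul]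
        -- it suffices to kill each monomial
        suffices h : Φ (ExteriorAlgebra.ιMulti ℝ p (fun k => b (r k))) = 0 by
          rw [h, smul_zero]
        by_cases hr : Function.Injective r
        · -- the monomial is a scalar eigenvector of each T i
          set i0 : Fin p := ⟨0, hp⟩ with hi0
          set c : Fin n → ℝ := fun i => 2⁻¹ * (1 + ∏ k, sgn i (r k)) with hc
          have heig : ∀ i, T i (ExteriorAlgebra.ιMulti ℝ p (fun k => b (r k))) =
              c i • (ExteriorAlgebra.ιMulti ℝ p (fun k => b (r k))) := by
            intro i
            have hmap : ExteriorAlgebra.map (A i).toLinearMap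
                (ExteriorAlgebra.ιMulti ℝ p (fun k => b (r k))) =
                (∏ k, sgn i (r k)) • ExteriorAlgebra.ιMulti ℝ p (fun k => b (r k)) := by
              rw [ExteriorAlgebra.map_apply_ιMulti]
              have : ((A i).toLinearMap ∘ fun k => b (r k)) =
                  fun k => sgn i (r k) • b (r k) := by
                funext k; simp [hAb]
              rw [this]
              exact MultilinearMap.map_smul_univ
                (ExteriorAlgebra.ιMulti ℝ p).toMultilinearMap _ _
            rw [hTapply, hmap, hc]
            module
          rw [hΦ, hscal _ _ c heig]
          have hzero : c (r i0) = 0 := by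
            have hprod : (∏ k, sgn (r i0) (r k)) = -1 := by
              have : ∀ k, sgn (r i0) (r k) = if k = i0 then (-1 : ℝ) else 1 := by
                intro k
                by_cases hk : k = i0
                · subst hk; simp [hsgn]
                · have : r k ≠ r i0 := fun h => hk (hr h)
                  simp [hsgn, this, hk]
              simp_rw [this]
              rw [Finset.prod_ite_eq' Finset.univ i0 (fun _ => (-1 : ℝ))]
              simp
            rw [hc]
            simp [hprod]
          have hmem : (0 : ℝ) ∈ (List.finRange n).map c := by
            rw [List.mem_map]
            exact ⟨r i0, List.mem_finRange _, hzero⟩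
          rw [List.prod_eq_zero hmem, zero_smul]
        · -- the monomial itself vanishes
          have : ∃ k l : Fin p, k ≠ l ∧ r k = r l := by
            simp only [Function.Injective, not_forall] at hr
            obtain ⟨k, l, hkl, hne⟩ := hr
            exact ⟨k, l, hne, hkl⟩
          obtain ⟨k, l, hne, hkl⟩ := this
          have : ExteriorAlgebra.ιMulti ℝ p (fun k => b (r k)) = 0 :=
            AlternatingMap.map_eq_zero_of_eq _ _ (by rw [hkl]) hne
          rw [this, map_zero]
    | zero => simp
    | add x y _ _ hx hy => rw [map_add, hx, hy, add_zero]
    | smul a x _ hx => rw [map_smul, hx, smul_zero]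
  rw [← hfix]
  exact hkill ω hω
end

section
/- Let T ∈ Div^m (components T^{j₁...j_p; a₁b₁c₁d₁...c_md_m} with normal-block symmetries and the vanishing cyclic sum over (j_p, c_t, d_t)). Associate to a component the multigraph on vertex set {1,...,n} with one edge a_t–b_t and one edge c_t–d_t for each block t. If the vertex labeled by the index value j_p is connected (in this multigraph) to a cycle, then the component vanishes. -/
open scoped BigOperators

namespace DivTensor

/-- A block of four indices `(a, b, c, d)`. -/
abbrev Blk (n : ℕ) := Fin n × Fin n × Fin n × Fin n

variable {n m q : ℕ}

def swapAB (x : Blk n) : Blk n := (x.2.1, x.1, x.2.2)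
def swapCD (x : Blk n) : Blk n := (x.1, x.2.1, x.2.2.2, x.2.2.1)
def swapPairs (x : Blk n) : Blk n := (x.2.2.1, x.2.2.2, x.1, x.2.1)
def rot1 (x : Blk n) : Blk n := (x.1, x.2.2.1, x.2.2.2, x.2.1)
def rot2 (x : Blk n) : Blk n := (x.1, x.2.2.2, x.2.1, x.2.2.1)

/-- Membership (at the level of components) in
`Div^m ⊆ ⊗^{q+1} V ⊗ S^m N²` (`V = ℝⁿ`): each 4-index block has the symmetries
of a contravariant second-order normal tensor, the blocks can be permuted, and
the cyclic sum over the indices `(j_p, c_t, d_t)` (the last contravariant index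
and the last two indices of any block) vanishes. -/
structure MemDiv (T : (Fin (q + 1) → Fin n) → (Fin m → Blk n) → ℝ) : Prop where
  symAB : ∀ J b t, T J (Function.update b t (swapAB (b t))) = T J b
  symCD : ∀ J b t, T J (Function.update b t (swapCD (b t))) = T J b
  symPairs : ∀ J b t, T J (Function.update b t (swapPairs (b t))) = T J b
  normal : ∀ J b t, T J b + T J (Function.update b t (rot1 (b t)))
      + T J (Function.update b t (rot2 (b t))) = 0
  blocksComm : ∀ J b (σ : Equiv.Perm (Fin m)), T J (b ∘ σ) = T J b
  cyc : ∀ (J : Fin q → Fin n) (jp : Fin n) (b : Fin m → Blk n) (t : Fin m),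
      T (Fin.snoc J jp) b
        + T (Fin.snoc J (b t).2.2.2)
            (Function.update b t ((b t).1, (b t).2.1, jp, (b t).2.2.1))
        + T (Fin.snoc J (b t).2.2.1)
            (Function.update b t ((b t).1, (b t).2.1, (b t).2.2.2, jp)) = 0

end DivTensor

/-- A finite multigraph. -/
structure Multigraph where
  V : Type
  E : Type
  ends : E → Sym2 V

namespace Multigraph

variable (G : Multigraph)

def Adj (u v : G.V) : Prop := ∃ e : G.E, G.ends e = s(u, v)

def Reachable (u v : G.V) : Prop := Relation.ReflTransGen G.Adj u v

/-- A cycle: pairwise distinct edges and vertices, consecutive incidences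
(cyclically).  A loop is a cycle of length 1 and a pair of parallel edges a
cycle of length 2. -/
def IsCycle {m : ℕ} (es : Fin (m + 1) → G.E) (vs : Fin (m + 1) → G.V) : Prop :=
  Function.Injective es ∧ Function.Injective vs ∧
    ∀ i : Fin (m + 1), G.ends (es i) = s(vs i, vs (i + 1))

/-- A vertex is connected to a cycle if its component contains a cycle. -/
def ConnectedToCycle (v : G.V) : Prop :=
  ∃ (m : ℕ) (es : Fin (m + 1) → G.E) (vs : Fin (m + 1) → G.V) (i : Fin (m + 1)),
    G.IsCycle es vs ∧ G.Reachable v (vs i)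

end Multigraph

namespace DivTensor

/-- The multigraph associated to a component of an element of `Div^m`:
the vertices are the index values `1, …, n` and each block `(a, b, c, d)`
contributes an edge `a – b` and an edge `c – d`. -/
def graphOf {n m : ℕ} (b : Fin m → Blk n) : Multigraph where
  V := Fin n
  E := Fin m × Bool
  ends := fun e =>
    if e.2 then s((b e.1).1, (b e.1).2.1) else s((b e.1).2.2.1, (b e.1).2.2.2)

variable {n m q : ℕ} {T : (Fin (q + 1) → Fin n) → (Fin m → Blk n) → ℝ}

/-- Replace the endpoints of edge `e` by `(x, x)`. -/
def setLoop (b : Fin m → Blk n) (e : Fin m × Bool) (x : Fin n) : Fin m → Blk n :=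
  if e.2 then Function.update b e.1 (x, x, (b e.1).2.2.1, (b e.1).2.2.2)
  else Function.update b e.1 ((b e.1).1, (b e.1).2.1, x, x)

lemma ends_setLoop_self (b : Fin m → Blk n) (e : Fin m × Bool) (x : Fin n) :
    (graphOf (setLoop b e x)).ends e = s(x, x) := by
  obtain ⟨t, s⟩ := e
  cases s <;> simp [setLoop, graphOf]

lemma ends_setLoop_ne (b : Fin m → Blk n) (e e' : Fin m × Bool) (x : Fin n)
    (h : e' ≠ e) : (graphOf (setLoop b e x)).ends e' = (graphOf b).ends e' := by
  obtain ⟨t, s⟩ := e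
  obtain ⟨t', s'⟩ := e'
  by_cases ht : t' = t
  · subst ht
    have hs : s' ≠ s := by simpa using h
    cases s <;> cases s' <;> simp_all [setLoop, graphOf]
  · cases s <;> simp [setLoop, graphOf, Function.update_of_ne ht]

lemma move_cd (hT : MemDiv T) (J : Fin q → Fin n) (b : Fin m → Blk n) (t : Fin m)
    (c jp : Fin n) (h : (b t).2.2 = (c, jp)) :
    T (Fin.snoc J jp) b =
      -(2⁻¹ : ℝ) * T (Fin.snoc J c)
        (Function.update b t ((b t).1, (b t).2.1, jp, jp)) := by
  have h1 : (b t).2.2.1 = c := by rw [h]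
  have h2 : (b t).2.2.2 = jp := by rw [h]
  have hc := hT.cyc J jp b t
  rw [h1, h2] at hc
  have key : T (Fin.snoc J jp) (Function.update b t ((b t).1, (b t).2.1, jp, c))
      = T (Fin.snoc J jp) b := by
    have hs := hT.symCD (Fin.snoc J jp)
      (Function.update b t ((b t).1, (b t).2.1, jp, c)) t
    have e1 : Function.update (Function.update b t ((b t).1, (b t).2.1, jp, c)) t
        (swapCD ((Function.update b t ((b t).1, (b t).2.1, jp, c)) t)) = b := by
      rw [Function.update_self, Function.update_idem]
      show Function.update b t ((b t).1, (b t).2.1, c, jp) = b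
      rw [show ((b t).1, (b t).2.1, c, jp) = b t from by rw [← h]]
      exact Function.update_eq_self t b
    rw [e1] at hs
    exact hs.symm
  rw [key] at hc
  linarith

lemma move_cd' (hT : MemDiv T) (J : Fin q → Fin n) (b : Fin m → Blk n) (t : Fin m)
    (c jp : Fin n) (h : s((b t).2.2.1, (b t).2.2.2) = s(c, jp)) :
    T (Fin.snoc J jp) b =
      -(2⁻¹ : ℝ) * T (Fin.snoc J c)
        (Function.update b t ((b t).1, (b t).2.1, jp, jp)) := by
  rcases Sym2.eq_iff.mp h with ⟨hc, hd⟩ | ⟨hc, hd⟩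
  · exact move_cd hT J b t c jp (Prod.ext hc hd)
  · -- (b t).2.2 = (jp, c); flip with symCD
    have hcd : (b t).2.2 = (jp, c) := Prod.ext hc hd
    set b₂ := Function.update b t ((b t).1, (b t).2.1, c, jp) with hb₂
    have hTb : T (Fin.snoc J jp) b₂ = T (Fin.snoc J jp) b := by
      have hs := hT.symCD (Fin.snoc J jp) b t
      have e1 : Function.update b t (swapCD (b t)) = b₂ := by
        show Function.update b t ((b t).1, (b t).2.1, (b t).2.2.2, (b t).2.2.1) = b₂
        rw [hb₂, hc, hd]
      rw [e1] at hs
      exact hs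
    have hb₂t : b₂ t = ((b t).1, (b t).2.1, c, jp) := Function.update_self _ _ _
    have := move_cd hT J b₂ t c jp (by rw [hb₂t])
    rw [hTb] at this
    rw [this]
    have e2 : Function.update b₂ t ((b₂ t).1, (b₂ t).2.1, jp, jp)
        = Function.update b t ((b t).1, (b t).2.1, jp, jp) := by
      simp [hb₂t, hb₂, Function.update_idem]
    rw [e2]

lemma loop_cd_zero (hT : MemDiv T) (J : Fin q → Fin n) (b : Fin m → Blk n)
    (t : Fin m) (jp : Fin n) (h : (b t).2.2 = (jp, jp)) :
    T (Fin.snoc J jp) b = 0 := by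
  have h1 : (b t).2.2.1 = jp := by rw [h]
  have h2 : (b t).2.2.2 = jp := by rw [h]
  have hc := hT.cyc J jp b t
  rw [h1, h2] at hc
  have e1 : Function.update b t ((b t).1, (b t).2.1, jp, jp) = b := by
    rw [show ((b t).1, (b t).2.1, jp, jp) = b t from by rw [← h]]
    exact Function.update_eq_self t b
  rw [e1] at hc
  linarith

lemma symPairs_update (hT : MemDiv T) (J : Fin (q+1) → Fin n) (b : Fin m → Blk n)
    (t : Fin m) (x : Blk n) :
    T J (Function.update b t (swapPairs x)) = T J (Function.update b t x) := by
  have hs := hT.symPairs J (Function.update b t x) t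
  rwa [Function.update_self, Function.update_idem] at hs

lemma loop_zero (hT : MemDiv T) (J : Fin q → Fin n) (b : Fin m → Blk n)
    (e : Fin m × Bool) (jp : Fin n) (h : (graphOf b).ends e = s(jp, jp)) :
    T (Fin.snoc J jp) b = 0 := by
  obtain ⟨t, s⟩ := e
  cases s
  · -- cd edge
    have h' : s((b t).2.2.1, (b t).2.2.2) = s(jp, jp) := h
    rcases Sym2.eq_iff.mp h' with ⟨hc, hd⟩ | ⟨hc, hd⟩ <;>
      exact loop_cd_zero hT J b t jp (Prod.ext hc hd)
  · -- ab edge: swap pairs first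
    have h' : s((b t).1, (b t).2.1) = s(jp, jp) := h
    have hs := hT.symPairs (Fin.snoc J jp) b t
    rw [← hs]
    set b₂ := Function.update b t (swapPairs (b t)) with hb₂
    have hb₂t : b₂ t = ((b t).2.2.1, (b t).2.2.2, (b t).1, (b t).2.1) :=
      Function.update_self _ _ _
    have h'' : s((b₂ t).2.2.1, (b₂ t).2.2.2) = s(jp, jp) := by rw [hb₂t]; exact h'
    rcases Sym2.eq_iff.mp h'' with ⟨hc, hd⟩ | ⟨hc, hd⟩ <;>
      exact loop_cd_zero hT J b₂ t jp (Prod.ext hc hd)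

lemma move (hT : MemDiv T) (J : Fin q → Fin n) (b : Fin m → Blk n)
    (e : Fin m × Bool) (c jp : Fin n) (h : (graphOf b).ends e = s(c, jp)) :
    T (Fin.snoc J jp) b = -(2⁻¹ : ℝ) * T (Fin.snoc J c) (setLoop b e jp) := by
  obtain ⟨t, s⟩ := e
  cases s
  · have h' : s((b t).2.2.1, (b t).2.2.2) = s(c, jp) := h
    exact move_cd' hT J b t c jp h'
  · have h' : s((b t).1, (b t).2.1) = s(c, jp) := h
    have hs := hT.symPairs (Fin.snoc J jp) b t
    rw [← hs]
    set b₂ := Function.update b t (swapPairs (b t)) with hb₂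
    have hb₂t : b₂ t = ((b t).2.2.1, (b t).2.2.2, (b t).1, (b t).2.1) :=
      Function.update_self _ _ _
    have h'' : s((b₂ t).2.2.1, (b₂ t).2.2.2) = s(c, jp) := by rw [hb₂t]; exact h'
    rw [move_cd' hT J b₂ t c jp h'']
    congr 1
    have e1 : Function.update b₂ t ((b₂ t).1, (b₂ t).2.1, jp, jp)
        = Function.update b t ((b t).2.2.1, (b t).2.2.2, jp, jp) := by
      simp [hb₂t, hb₂, Function.update_idem, swapPairs]
    rw [e1]
    have e2 : setLoop b (t, true) jp
        = Function.update b t (jp, jp, (b t).2.2.1, (b t).2.2.2) := rfl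
    rw [e2, ← symPairs_update hT (Fin.snoc J c) b t (jp, jp, (b t).2.2.1, (b t).2.2.2)]
    rfl

/-- A walk of length `k` in the multigraph of `b`, indexed by naturals. -/
def IsWalkN (b : Fin m → Blk n) (k : ℕ) (w : ℕ → Fin n) (f : ℕ → Fin m × Bool) : Prop :=
  ∀ l, l < k → (graphOf b).ends (f l) = s(w l, w (l + 1))

lemma walk_loop_zero (hT : MemDiv T) (J : Fin q → Fin n) :
    ∀ k (b : Fin m → Blk n) (w : ℕ → Fin n) (f : ℕ → Fin m × Bool) (e : Fin m × Bool),
      IsWalkN b k w f → (graphOf b).ends e = s(w k, w k) →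
      T (Fin.snoc J (w 0)) b = 0 := by
  intro k
  induction k using Nat.strong_induction_on with
  | _ k ih =>
    intro b w f e hw he
    match k, ih with
    | 0, _ => exact loop_zero hT J b e (w 0) he
    | k + 1, ih =>
      by_cases h0 : f 0 = e
      · have h1 := hw 0 (Nat.succ_pos k)
        rw [h0, he] at h1
        have hww : w (k + 1) = w 0 := by
          rcases Sym2.eq_iff.mp h1 with ⟨hh, _⟩ | ⟨_, hh⟩ <;> exact hh
        exact loop_zero hT J b e (w 0) (by rw [← hww]; exact he)
      · by_cases hr : ∃ l, 0 < l ∧ l < k + 1 ∧ f l = f 0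
        · obtain ⟨l, hl0, hlk, hfl⟩ := hr
          have h1 := hw 0 (Nat.succ_pos k)
          have h2 := hw l hlk
          rw [hfl, h1] at h2
          -- s(w 0, w 1) = s(w l, w (l+1)); find p with w p = w 0, 1 ≤ p ≤ l+1
          have hp : ∃ p, 0 < p ∧ p ≤ l + 1 ∧ w p = w 0 := by
            rcases Sym2.eq_iff.mp h2 with ⟨hh, _⟩ | ⟨hh, _⟩
            · exact ⟨l, hl0, Nat.le_succ l, hh.symm⟩
            · exact ⟨l + 1, Nat.succ_pos l, le_rfl, hh.symm⟩
          obtain ⟨p, hp0, hpl, hwp⟩ := hp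
          have hkey := ih (k + 1 - p) (by omega) b (fun j => w (p + j)) (fun j => f (p + j)) e
            (by
              intro l' hl'
              have := hw (p + l') (by omega)
              simpa [Nat.add_assoc] using this)
            (by
              have hpk : p + (k + 1 - p) = k + 1 := by omega
              simpa [hpk] using he)
          simpa [hwp] using hkey
        · push_neg at hr
          have h1 := hw 0 (Nat.succ_pos k)
          have hmv := move hT J b (f 0) (w 1) (w 0) (by rw [h1, Sym2.eq_swap])
          rw [hmv]
          have h2 : T (Fin.snoc J (w 1)) (setLoop b (f 0) (w 0)) = 0 := by
            have hkey := ih k (Nat.lt_succ_self k) (setLoop b (f 0) (w 0))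
              (fun j => w (1 + j)) (fun j => f (1 + j)) e
              (by
                intro l' hl'
                have hne : f (1 + l') ≠ f 0 := hr (1 + l') (by omega) (by omega)
                rw [ends_setLoop_ne b (f 0) (f (1 + l')) (w 0) hne]
                have := hw (1 + l') (by omega)
                simp only [Nat.add_assoc] at this; exact this)
              (by
                rw [ends_setLoop_ne b (f 0) e (w 0) (Ne.symm h0)]
                have hk1 : 1 + k = k + 1 := by omega
                show (graphOf b).ends e = s(w (1 + k), w (1 + k)); rw [hk1]; exact he)
            simpa using hkey
          rw [h2]; ring

open Fin.NatCast
open Fin.CommRing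

lemma fin_aux1 (N : ℕ) (i : Fin (N+2)) (l : ℕ) (hl : l < N + 1) :
    i + 1 + (l : Fin (N+2)) ≠ i := by
  intro h
  have h2 : i + ((1 : Fin (N+2)) + (l : Fin (N+2))) = i + 0 := by
    rw [← add_assoc, h, add_zero]
  have h3 : (1 : Fin (N+2)) + (l : Fin (N+2)) = 0 := add_left_cancel h2
  have h4 : ((1 + l : ℕ) : Fin (N+2)) = 0 := by push_cast; exact h3
  rw [Fin.natCast_eq_zero] at h4
  have := Nat.le_of_dvd (by omega) h4
  omega

lemma fin_aux2 (N : ℕ) (i : Fin (N+2)) : i + 1 + ((N+1 : ℕ) : Fin (N+2)) = i := by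
  have h : ((N+2 : ℕ) : Fin (N+2)) = 0 := Fin.natCast_self _
  push_cast at h
  rw [add_assoc]
  have : (1 : Fin (N+2)) + ((N+1 : ℕ) : Fin (N+2)) = 0 := by
    push_cast
    linear_combination h
  rw [this, add_zero]

lemma walk_cycle_zero (hT : MemDiv T) (J : Fin q → Fin n) :
    ∀ k (b : Fin m → Blk n) (w : ℕ → Fin n) (f : ℕ → Fin m × Bool),
      IsWalkN b k w f →
      (∃ (N : ℕ) (es : Fin (N+1) → Fin m × Bool) (vs : Fin (N+1) → Fin n)
          (i : Fin (N+1)), (graphOf b).IsCycle es vs ∧ w k = vs i) →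
      T (Fin.snoc J (w 0)) b = 0 := by
  intro k
  induction k using Nat.strong_induction_on with
  | _ k ih =>
    intro b w f hw hcy
    obtain ⟨N, es, vs, i, hcyc, hwk⟩ := hcy
    match k, hw, hwk, ih with
    | 0, hw, hwk, _ =>
      match N, es, vs, i, hcyc, hwk with
      | 0, es, vs, i, hcyc, hwk =>
        have he := hcyc.2.2 i
        have hii : i + 1 = i := by omega
        rw [hii] at he
        exact loop_zero hT J b (es i) (w 0) (by rw [hwk]; exact he)
      | N + 1, es, vs, i, hcyc, hwk =>
        have he := hcyc.2.2 i
        have hmv := move hT J b (es i) (vs (i+1)) (vs i)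
          (he.trans (Sym2.eq_swap))
        rw [hwk, hmv]
        have hz : T (Fin.snoc J (vs (i+1))) (setLoop b (es i) (vs i)) = 0 := by
          have hkey := walk_loop_zero hT J (N+1) (setLoop b (es i) (vs i))
            (fun l => vs (i + 1 + (l : Fin (N+2))))
            (fun l => es (i + 1 + (l : Fin (N+2))))
            (es i)
            (by
              intro l hl
              have hne2 : es (i + 1 + (l : Fin (N+2))) ≠ es i :=
                fun hh => fin_aux1 N i l hl (hcyc.1 hh)
              rw [ends_setLoop_ne b (es i) _ (vs i) hne2, hcyc.2.2]
              have harg : i + 1 + (l : Fin (N+2)) + 1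
                  = i + 1 + ((l + 1 : ℕ) : Fin (N+2)) := by push_cast; ring
              rw [harg]
              rfl)
            (by
              rw [ends_setLoop_self]
              show s(vs i, vs i) = s(vs (i + 1 + ((N + 1 : ℕ) : Fin (N+2))),
                vs (i + 1 + ((N + 1 : ℕ) : Fin (N+2))))
              rw [fin_aux2 N i])
          simpa using hkey
        rw [hz]; ring
    | k + 1, hw, hwk, ih =>
      by_cases h0 : ∃ j, f 0 = es j
      · obtain ⟨j, hj⟩ := h0
        have h1 := hw 0 (Nat.succ_pos k)
        rw [hj, hcyc.2.2 j] at h1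
        have hi' : ∃ i', w 0 = vs i' := by
          rcases Sym2.eq_iff.mp h1 with ⟨hh, _⟩ | ⟨_, hh⟩
          · exact ⟨j, hh.symm⟩
          · exact ⟨j + 1, hh.symm⟩
        obtain ⟨i', hi'⟩ := hi'
        exact ih 0 (Nat.succ_pos k) b (fun _ => w 0) f (by intro l hl; omega)
          ⟨N, es, vs, i', hcyc, hi'⟩
      · by_cases hr : ∃ l, 0 < l ∧ l < k + 1 ∧ f l = f 0
        · obtain ⟨l, hl0, hlk, hfl⟩ := hr
          have h1 := hw 0 (Nat.succ_pos k)
          have h2 := hw l hlk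
          rw [hfl, h1] at h2
          have hp : ∃ p, 0 < p ∧ p ≤ l + 1 ∧ w p = w 0 := by
            rcases Sym2.eq_iff.mp h2 with ⟨hh, _⟩ | ⟨hh, _⟩
            · exact ⟨l, hl0, Nat.le_succ l, hh.symm⟩
            · exact ⟨l + 1, Nat.succ_pos l, le_rfl, hh.symm⟩
          obtain ⟨p, hp0, hpl, hwp⟩ := hp
          have hkey := ih (k + 1 - p) (by omega) b (fun j => w (p + j))
            (fun j => f (p + j))
            (by
              intro l' hl'
              have := hw (p + l') (by omega)
              simpa [Nat.add_assoc] using this)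
            ⟨N, es, vs, i, hcyc, by
              have hpk : p + (k + 1 - p) = k + 1 := by omega
              simpa [hpk] using hwk⟩
          simpa [hwp] using hkey
        · push_neg at hr
          have h1 := hw 0 (Nat.succ_pos k)
          have hmv := move hT J b (f 0) (w 1) (w 0) (by rw [h1, Sym2.eq_swap])
          rw [hmv]
          have hne : ∀ j, es j ≠ f 0 := fun j hh => h0 ⟨j, hh.symm⟩
          have h2 : T (Fin.snoc J (w 1)) (setLoop b (f 0) (w 0)) = 0 := by
            have hkey := ih k (Nat.lt_succ_self k) (setLoop b (f 0) (w 0))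
              (fun j => w (1 + j)) (fun j => f (1 + j))
              (by
                intro l' hl'
                have hnef : f (1 + l') ≠ f 0 := hr (1 + l') (by omega) (by omega)
                rw [ends_setLoop_ne b (f 0) (f (1 + l')) (w 0) hnef]
                have := hw (1 + l') (by omega)
                simp only [Nat.add_assoc] at this; exact this)
              ⟨N, es, vs, i, ⟨hcyc.1, hcyc.2.1, by
                  intro j
                  rw [ends_setLoop_ne b (f 0) (es j) (w 0) (hne j)]
                  exact hcyc.2.2 j⟩, by
                have hk1 : 1 + k = k + 1 := by omega
                simpa [hk1] using hwk⟩
            simpa using hkey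
          rw [h2]; ring

lemma reachable_walk (b : Fin m → Blk n) (e₀ : Fin m × Bool) {u v : Fin n}
    (h : (graphOf b).Reachable u v) :
    ∃ (k : ℕ) (w : ℕ → Fin n) (f : ℕ → Fin m × Bool),
      w 0 = u ∧ w k = v ∧ IsWalkN b k w f := by
  induction h with
  | refl => exact ⟨0, fun _ => u, fun _ => e₀, rfl, rfl, fun l hl => by omega⟩
  | @tail v' c _ hadj ih =>
    obtain ⟨k, w, f, hw0, hwk, hwalk⟩ := ih
    obtain ⟨e, he⟩ := hadj
    refine ⟨k + 1, fun l => if l ≤ k then w l else c, fun l => if l < k then f l else e,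
      ?_, ?_, ?_⟩
    · simp [hw0]
    · simp
    · intro l hl
      by_cases hlk : l < k
      · simp only [if_pos hlk, if_pos (Nat.le_of_lt hlk), if_pos (by omega : l + 1 ≤ k)]
        have hf : (if l < k then f l else e) = f l := if_pos hlk
        rw [hf]
        exact hwalk l hlk
      · have hlk' : l = k := by omega
        subst hlk'
        simp only [if_neg (lt_irrefl l), if_pos (le_refl l), if_neg (by omega : ¬ l + 1 ≤ l)]
        have hf : (if l < l then f l else e) = e := if_neg (lt_irrefl l)
        rw [hf, hwk]
        exact he


/-- If, in the multigraph associated to a component of an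
element of `Div^m`, the vertex labelled by the last contravariant index `j_p`
is connected to a cycle, then the component vanishes. -/
theorem component_connectedToCycle_eq_zero {n m q : ℕ}
    (T : (Fin (q + 1) → Fin n) → (Fin m → Blk n) → ℝ) (hT : MemDiv T) :
    ∀ (J : Fin q → Fin n) (jp : Fin n) (b : Fin m → Blk n),
      (graphOf b).ConnectedToCycle jp → T (Fin.snoc J jp) b = 0 := by
  intro J jp b hconn
  obtain ⟨N, es, vs, i, hcyc, hreach⟩ := hconn
  obtain ⟨k, w, f, hw0, hwk, hwalk⟩ := reachable_walk b (es 0) hreach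
  have hz := walk_cycle_zero hT J k b w f hwalk ⟨N, es, vs, i, hcyc, hwk⟩
  rwa [hw0] at hz

end DivTensor
end

section
/- For m ≥ n/2, the space Div^m ⊂ ⊗^p ℝⁿ ⊗ S^m N² of tensors satisfying the divergence symmetries is zero: every component of every element vanishes. -/
open scoped BigOperators

set_option linter.unusedSectionVars false

namespace DivWalk

variable {V S : Type*}

def srcE (E : S → V × V) (st : S × Bool) : V := if st.2 then (E st.1).1 else (E st.1).2
def dstE (E : S → V × V) (st : S × Bool) : V := if st.2 then (E st.1).2 else (E st.1).1

def IsWalk (E : S → V × V) (A : Finset S) : V → List (S × Bool) → V → Prop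
  | x, [], y => x = y
  | x, st :: l, y => st.1 ∈ A ∧ srcE E st = x ∧ IsWalk E A (dstE E st) l y

def slots (l : List (S × Bool)) : List S := l.map Prod.fst

def visits (E : S → V × V) (x : V) (l : List (S × Bool)) : List V := x :: l.map (dstE E)

variable {E E' : S → V × V} {A B : Finset S}

@[simp] lemma isWalk_nil {x y : V} : IsWalk E A x [] y ↔ x = y := Iff.rfl

@[simp] lemma isWalk_cons {x y : V} {st : S × Bool} {l : List (S × Bool)} :
    IsWalk E A x (st :: l) y ↔ st.1 ∈ A ∧ srcE E st = x ∧ IsWalk E A (dstE E st) l y := Iff.rfl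

@[simp] lemma slots_nil : slots ([] : List (S × Bool)) = [] := rfl
@[simp] lemma slots_cons (st : S × Bool) (l : List (S × Bool)) :
    slots (st :: l) = st.1 :: slots l := rfl
@[simp] lemma slots_append (l₁ l₂ : List (S × Bool)) :
    slots (l₁ ++ l₂) = slots l₁ ++ slots l₂ := List.map_append

lemma isWalk_append {x y : V} {l₁ l₂ : List (S × Bool)} :
    IsWalk E A x (l₁ ++ l₂) y ↔ ∃ v, IsWalk E A x l₁ v ∧ IsWalk E A v l₂ y := by
  induction l₁ generalizing x with
  | nil => simp
  | cons st l ih => simp [ih, and_assoc]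

lemma IsWalk.mono (hAB : A ⊆ B) {x y : V} {l : List (S × Bool)}
    (h : IsWalk E A x l y) : IsWalk E B x l y := by
  induction l generalizing x with
  | nil => exact h
  | cons st l ih => exact ⟨hAB h.1, h.2.1, ih h.2.2⟩

lemma IsWalk.slots_mem {x y : V} {l : List (S × Bool)} (h : IsWalk E A x l y)
    {st : S × Bool} (hst : st ∈ l) : st.1 ∈ A := by
  induction l generalizing x with
  | nil => cases hst
  | cons st' l ih =>
    rcases List.mem_cons.1 hst with rfl | hst
    · exact h.1
    · exact ih h.2.2 hst

lemma srcE_congr {st : S × Bool} (h : E' st.1 = E st.1) : srcE E' st = srcE E st := by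
  simp [srcE, h]

lemma dstE_congr {st : S × Bool} (h : E' st.1 = E st.1) : dstE E' st = dstE E st := by
  simp [dstE, h]

lemma IsWalk.congr {l : List (S × Bool)} (hE : ∀ st ∈ l, E' st.1 = E st.1) {x y : V}
    (h : IsWalk E A x l y) : IsWalk E' A x l y := by
  induction l generalizing x with
  | nil => exact h
  | cons st l ih =>
    refine ⟨h.1, ?_, ?_⟩
    · rw [srcE_congr (hE st (by simp))]; exact h.2.1
    · rw [dstE_congr (hE st (by simp))]
      exact ih (fun st' h' => hE st' (by simp [h'])) h.2.2

def flipSt (st : S × Bool) : S × Bool := (st.1, !st.2)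

@[simp] lemma flipSt_fst (st : S × Bool) : (flipSt st).1 = st.1 := rfl

@[simp] lemma srcE_flip (st : S × Bool) : srcE E (flipSt st) = dstE E st := by
  cases st with | mk s o => cases o <;> simp [srcE, dstE, flipSt]

@[simp] lemma dstE_flip (st : S × Bool) : dstE E (flipSt st) = srcE E st := by
  cases st with | mk s o => cases o <;> simp [srcE, dstE, flipSt]

@[simp] lemma visits_nil (x : V) : visits E x [] = [x] := rfl

@[simp] lemma visits_cons (x : V) (st : S × Bool) (l : List (S × Bool)) :
    visits E x (st :: l) = x :: visits E (dstE E st) l := rfl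

lemma IsWalk.reverse {x y : V} {l : List (S × Bool)} (h : IsWalk E A x l y) :
    IsWalk E A y (l.reverse.map flipSt) x := by
  induction l generalizing x with
  | nil => simp [h.symm]
  | cons st l ih =>
    simp only [List.reverse_cons, List.map_append]
    rw [isWalk_append]
    refine ⟨dstE E st, ih h.2.2, ?_⟩
    exact ⟨by simpa using h.1, by simp, by simp [h.2.1]⟩

lemma end_mem_visits {x y : V} {l : List (S × Bool)} (h : IsWalk E A x l y) :
    y ∈ visits E x l := by
  induction l generalizing x with
  | nil => simp [h.symm]
  | cons st l ih =>
    rw [visits_cons]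
    exact List.mem_cons_of_mem _ (ih h.2.2)

@[simp] lemma visits_append (x : V) (l₁ l₂ : List (S × Bool)) :
    visits E x (l₁ ++ l₂) = visits E x l₁ ++ l₂.map (dstE E) := by
  simp [visits]

lemma mem_visits_split {x y v : V} {l : List (S × Bool)} (h : IsWalk E A x l y)
    (hv : v ∈ visits E x l) :
    ∃ l₁ l₂, l = l₁ ++ l₂ ∧ IsWalk E A x l₁ v ∧ IsWalk E A v l₂ y := by
  induction l generalizing x with
  | nil =>
    have hx : v = x := by simpa using hv
    exact ⟨[], [], by simp, hx.symm, hx ▸ h⟩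
  | cons st l ih =>
    by_cases hx : v = x
    · exact ⟨[], st :: l, by simp, hx.symm, hx ▸ h⟩
    · have hv' : v ∈ visits E (dstE E st) l := by
        rw [visits_cons] at hv
        rcases List.mem_cons.1 hv with h' | h'
        · exact absurd h' hx
        · exact h'
      obtain ⟨l₁, l₂, rfl, h1, h2⟩ := ih h.2.2 hv'
      exact ⟨st :: l₁, l₂, by simp, ⟨h.1, h.2.1, h1⟩, h2⟩

lemma mem_dst_split {x y v : V} {l : List (S × Bool)} (h : IsWalk E A x l y)
    (hv : v ∈ l.map (dstE E)) :
    ∃ l₁ l₂, l = l₁ ++ l₂ ∧ l₁ ≠ [] ∧ IsWalk E A x l₁ v ∧ IsWalk E A v l₂ y := by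
  induction l generalizing x with
  | nil => simp at hv
  | cons st l ih =>
    by_cases hd : v = dstE E st
    · exact ⟨[st], l, by simp, by simp, ⟨h.1, h.2.1, hd.symm⟩, hd ▸ h.2.2⟩
    · have hv' : v ∈ l.map (dstE E) := by
        rw [List.map_cons] at hv
        rcases List.mem_cons.1 hv with h' | h'
        · exact absurd h' hd
        · exact h'
      obtain ⟨l₁, l₂, rfl, hne, h1, h2⟩ := ih h.2.2 hv'
      exact ⟨st :: l₁, l₂, by simp, by simp, ⟨h.1, h.2.1, h1⟩, h2⟩

lemma step_src_mem {x y : V} {l : List (S × Bool)} (h : IsWalk E A x l y)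
    {st : S × Bool} (hst : st ∈ l) : srcE E st ∈ visits E x l := by
  induction l generalizing x with
  | nil => cases hst
  | cons st' l ih =>
    rw [visits_cons]
    rcases List.mem_cons.1 hst with rfl | hst
    · exact h.2.1 ▸ List.mem_cons_self
    · exact List.mem_cons_of_mem _ (ih h.2.2 hst)

lemma step_dst_mem {x y : V} {l : List (S × Bool)} (h : IsWalk E A x l y)
    {st : S × Bool} (hst : st ∈ l) : dstE E st ∈ visits E x l := by
  induction l generalizing x with
  | nil => cases hst
  | cons st' l ih =>
    rw [visits_cons]
    rcases List.mem_cons.1 hst with rfl | hst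
    · exact List.mem_cons_of_mem _ (by
        rcases l with _ | ⟨st2, l⟩
        · simp [h.2.2.symm]
        · exact List.mem_cons_self)
    · exact List.mem_cons_of_mem _ (ih h.2.2 hst)

lemma src_ne_end {x y : V} {l : List (S × Bool)} (h : IsWalk E A x l y)
    (hnd : (visits E x l).Nodup) {st : S × Bool} (hst : st ∈ l) : srcE E st ≠ y := by
  induction l generalizing x with
  | nil => cases hst
  | cons st' l ih =>
    rw [visits_cons] at hnd
    have hx : x ∉ visits E (dstE E st') l := (List.nodup_cons.1 hnd).1
    have hnd' : (visits E (dstE E st') l).Nodup := (List.nodup_cons.1 hnd).2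
    rcases List.mem_cons.1 hst with rfl | hst
    · rw [h.2.1]
      intro hxy
      exact hx (hxy ▸ end_mem_visits h.2.2)
    · exact ih h.2.2 hnd' hst

lemma pair_eq_of_slot {st st' : S × Bool} (hs : st.1 = st'.1) :
    srcE E st = srcE E st' ∨ srcE E st = dstE E st' := by
  cases st with | mk s o =>
  cases st' with | mk s' o' =>
  simp only at hs
  subst hs
  cases o <;> cases o' <;> simp [srcE, dstE]

lemma slots_nodup_of_visits_nodup {x y : V} {l : List (S × Bool)}
    (h : IsWalk E A x l y) (hnd : (visits E x l).Nodup) : (slots l).Nodup := by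
  induction l generalizing x with
  | nil => simp
  | cons st l ih =>
    rw [visits_cons] at hnd
    have hx : x ∉ visits E (dstE E st) l := (List.nodup_cons.1 hnd).1
    have hnd' : (visits E (dstE E st) l).Nodup := (List.nodup_cons.1 hnd).2
    refine List.nodup_cons.2 ⟨?_, ih h.2.2 hnd'⟩
    intro hmem
    obtain ⟨st', hst', hseq⟩ := List.mem_map.1 hmem
    have hor : srcE E st = srcE E st' ∨ srcE E st = dstE E st' :=
      pair_eq_of_slot (E := E) hseq.symm
    rw [h.2.1] at hor
    rcases hor with h' | h'
    · exact hx (h' ▸ step_src_mem h.2.2 hst')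
    · exact hx (h' ▸ step_dst_mem h.2.2 hst')

/-! ### Reachability and revisiting trails -/

def Reach (E : S → V × V) (A : Finset S) (x y : V) : Prop := ∃ l, IsWalk E A x l y

lemma Reach.refl (x : V) : Reach E A x x := ⟨[], rfl⟩

lemma Reach.trans {x y z : V} (h1 : Reach E A x y) (h2 : Reach E A y z) : Reach E A x z := by
  obtain ⟨l1, h1⟩ := h1; obtain ⟨l2, h2⟩ := h2
  exact ⟨l1 ++ l2, isWalk_append.2 ⟨y, h1, h2⟩⟩

lemma Reach.symm {x y : V} (h : Reach E A x y) : Reach E A y x := by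
  obtain ⟨l, h⟩ := h; exact ⟨_, h.reverse⟩

lemma Reach.mono (hAB : A ⊆ B) {x y : V} (h : Reach E A x y) : Reach E B x y := by
  obtain ⟨l, h⟩ := h; exact ⟨l, h.mono hAB⟩

/-- A trail from `x` to some `y` followed by a nonempty closed trail at `y`,
all slots pairwise distinct. -/
def Rev (E : S → V × V) (A : Finset S) (x : V) : Prop :=
  ∃ p y l, IsWalk E A x p y ∧ IsWalk E A y l y ∧ l ≠ [] ∧ (slots (p ++ l)).Nodup

lemma Rev.mono (hAB : A ⊆ B) {x : V} (h : Rev E A x) : Rev E B x := by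
  obtain ⟨p, y, l, h1, h2, h3, h4⟩ := h
  exact ⟨p, y, l, h1.mono hAB, h2.mono hAB, h3, h4⟩

lemma Rev.congr (hE : ∀ s ∈ A, E' s = E s) {x : V} (h : Rev E A x) : Rev E' A x := by
  obtain ⟨p, y, l, h1, h2, h3, h4⟩ := h
  exact ⟨p, y, l, h1.congr (fun st hst => hE _ (h1.slots_mem hst)),
    h2.congr (fun st hst => hE _ (h2.slots_mem hst)), h3, h4⟩

/-- If the visit list repeats, the walk can be shortened (same endpoints). -/
lemma shorten {x y : V} {l : List (S × Bool)} (h : IsWalk E A x l y)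
    (hnd : ¬ (visits E x l).Nodup) :
    ∃ l', IsWalk E A x l' y ∧ l'.length < l.length := by
  induction l generalizing x with
  | nil => simp at hnd
  | cons st l ih =>
    by_cases hx : x ∈ (st :: l).map (dstE E)
    · obtain ⟨l₁, l₂, heq, hne, h1, h2⟩ := mem_dst_split h hx
      refine ⟨l₂, h2, ?_⟩
      rw [heq, List.length_append]
      have : 0 < l₁.length := List.length_pos_iff.2 hne
      omega
    · have hx' : x ∉ visits E (dstE E st) l := by
        intro hmem
        rcases List.mem_cons.1 hmem with h' | h'
        · exact hx (h' ▸ by simp)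
        · exact hx (by
            rw [List.map_cons]
            exact List.mem_cons_of_mem _ h')
      have hnd' : ¬ (visits E (dstE E st) l).Nodup := by
        intro hn
        exact hnd (by rw [visits_cons]; exact List.nodup_cons.2 ⟨hx', hn⟩)
      obtain ⟨l', h1, h2⟩ := ih h.2.2 hnd'
      exact ⟨st :: l', ⟨h.1, h.2.1, h1⟩, by simpa using Nat.succ_lt_succ h2⟩

/-- From any walk into a set `Z`, extract a vertex-injective walk whose only
`Z`-visit is its endpoint. -/
lemma exists_nice_walk {Z : Set V} :
    ∀ N (w : List (S × Bool)) (j t : V), w.length ≤ N → IsWalk E A j w t → t ∈ Z →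
    ∃ w' t', IsWalk E A j w' t' ∧ t' ∈ Z ∧ (visits E j w').Nodup ∧
      (∀ v ∈ visits E j w', v ∈ Z → v = t') := by
  intro N
  induction N with
  | zero =>
    intro w j t hlen h ht
    have : w = [] := List.length_eq_zero_iff.1 (Nat.le_zero.1 hlen)
    subst this
    refine ⟨[], j, rfl, h ▸ ht, by simp, ?_⟩
    intro v hv _
    have : v = j := by simpa using hv
    simp [this, h]
  | succ N ihN =>
    intro w j t hlen h ht
    by_cases hnd : (visits E j w).Nodup
    · by_cases hZ : ∀ v ∈ visits E j w, v ∈ Z → v = t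
      · exact ⟨w, t, h, ht, hnd, hZ⟩
      · push_neg at hZ
        obtain ⟨v, hv, hvZ, hvt⟩ := hZ
        obtain ⟨l₁, l₂, heq, h1, h2⟩ := mem_visits_split h hv
        have hl₂ : l₂ ≠ [] := by
          rintro rfl
          exact hvt h2
        refine ihN l₁ j v ?_ h1 hvZ
        have : 0 < l₂.length := List.length_pos_iff.2 hl₂
        rw [heq, List.length_append] at hlen
        omega
    · obtain ⟨w', h1, h2⟩ := shorten h hnd
      exact ihN w' j t (by omega) h1 ht

/-- Transport of `Rev` along reachability. -/
lemma Rev.reach {j x : V} (hr : Reach E A j x) (h : Rev E A x) : Rev E A j := by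
  classical
  obtain ⟨p, y, l, hp, hl, hlne, hnd⟩ := h
  set Z : Set V := {v | v ∈ visits E y l} with hZdef
  -- j reaches y
  obtain ⟨w0, hw0⟩ := hr.trans ⟨p, hp⟩
  obtain ⟨w, t', hw, ht'Z, hwnd, honly⟩ :=
    exists_nice_walk (Z := Z) w0.length w0 j y le_rfl hw0 (end_mem_visits hl)
  -- slots of w avoid slots of l
  have hslots_l : (slots l).Nodup := (List.nodup_append.1 (by simpa using hnd)).2.1
  have hdisj : ∀ s ∈ slots w, s ∉ slots l := by
    intro s hsw hsl
    obtain ⟨st, hst, rfl⟩ := List.mem_map.1 hsw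
    obtain ⟨st', hst', hseq⟩ := List.mem_map.1 hsl
    have h1 : srcE E st = srcE E st' ∨ srcE E st = dstE E st' :=
      pair_eq_of_slot (E := E) hseq.symm
    have h2 : srcE E st ∈ Z := by
      rcases h1 with h' | h'
      · exact h' ▸ step_src_mem hl hst'
      · exact h' ▸ step_dst_mem hl hst'
    have h3 : srcE E st = t' := honly _ (step_src_mem hw hst) h2
    exact src_ne_end hw hwnd hst h3
  -- rotate l to start at t'
  obtain ⟨l₁, l₂, rfl, hA1, hA2⟩ := mem_visits_split hl ht'Z
  refine ⟨w, t', l₂ ++ l₁, hw, isWalk_append.2 ⟨y, hA2, hA1⟩, ?_, ?_⟩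
  · intro hnil
    rcases List.append_eq_nil_iff.1 hnil with ⟨rfl, rfl⟩
    exact hlne rfl
  · rw [slots_append, List.nodup_append]
    refine ⟨slots_nodup_of_visits_nodup hw hwnd, ?_, ?_⟩
    · have : (slots (l₂ ++ l₁)).Perm (slots (l₁ ++ l₂)) := by
        simp only [slots_append]
        exact List.perm_append_comm
      exact this.nodup_iff.2 hslots_l
    · intro s hs s' hs' hss'
      subst hss'
      exact hdisj s hs (by
        have : (slots (l₂ ++ l₁)).Perm (slots (l₁ ++ l₂)) := by
          simp only [slots_append]; exact List.perm_append_comm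
        exact this.mem_iff.1 hs')

/-! ### Counting -/

variable [DecidableEq V] [DecidableEq S]

def touched (E : S → V × V) (A : Finset S) : Finset V :=
  A.biUnion (fun s => {(E s).1, (E s).2})

lemma mem_touched_of_slot {s : S} (hs : s ∈ A) :
    (E s).1 ∈ touched E A ∧ (E s).2 ∈ touched E A := by
  constructor <;> exact Finset.mem_biUnion.2 ⟨s, hs, by simp⟩

lemma src_mem_touched {st : S × Bool} (hst : st.1 ∈ A) : srcE E st ∈ touched E A := by
  rcases st with ⟨s, o⟩
  cases o
  · exact (mem_touched_of_slot hst).2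
  · exact (mem_touched_of_slot hst).1

lemma touched_mono (hAB : A ⊆ B) : touched E A ⊆ touched E B := by
  intro v hv
  obtain ⟨s, hs, hv⟩ := Finset.mem_biUnion.1 hv
  exact Finset.mem_biUnion.2 ⟨s, hAB hs, hv⟩

lemma rev_of_loop {s : S} (hs : s ∈ A) (hloop : (E s).1 = (E s).2) :
    Rev E A (E s).1 := by
  refine ⟨[], (E s).1, [(s, true)], rfl, ?_, by simp, by simp⟩
  exact ⟨hs, rfl, hloop.symm⟩

lemma no_loop (hrev : ∀ x, ¬ Rev E A x) {s : S} (hs : s ∈ A) : (E s).1 ≠ (E s).2 :=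
  fun h => hrev _ (rev_of_loop hs h)

/-- The leaf-search: walk a vertex-injective trail as far as possible; either we
find a revisiting configuration or a leaf. -/
lemma search [Fintype V] (hrev : ∀ x, ¬ Rev E A x) :
    ∀ (N : ℕ) (x z : V) (l : List (S × Bool)), Fintype.card V ≤ l.length + N →
      IsWalk E A x l z → (visits E x l).Nodup → l ≠ [] →
      ∃ s ∈ A, ∃ zf, (zf = (E s).1 ∨ zf = (E s).2) ∧
        ∀ s' ∈ A, s' ≠ s → zf ≠ (E s').1 ∧ zf ≠ (E s').2 := by
  intro N
  induction N with
  | zero =>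
    intro x z l hlen h hnd _
    exfalso
    have h1 : (visits E x l).length = l.length + 1 := by simp [visits]
    have h2 := List.Nodup.length_le_card hnd
    omega
  | succ N ihN =>
    intro x z l hlen h hnd hlne
    by_cases hD : ∃ st : S × Bool, st.1 ∈ A ∧ srcE E st = z ∧ st.1 ∉ slots l
    · obtain ⟨st, hstA, hsrc, hstl⟩ := hD
      by_cases hw : dstE E st ∈ visits E x l
      · exfalso
        obtain ⟨l₁, l₂, rfl, h1, h2⟩ := mem_visits_split h hw
        refine hrev x ⟨l₁, dstE E st, l₂ ++ [st], h1, ?_, by simp, ?_⟩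
        · exact isWalk_append.2 ⟨z, h2, ⟨hstA, hsrc, rfl⟩⟩
        · have heq : slots (l₁ ++ (l₂ ++ [st])) = slots (l₁ ++ l₂) ++ [st.1] := by
            simp
          rw [heq]
          refine List.Nodup.append (slots_nodup_of_visits_nodup h hnd) (by simp) ?_
          intro a ha hb
          have : a = st.1 := by simpa using hb
          exact hstl (this ▸ ha)
      · refine ihN x (dstE E st) (l ++ [st]) (by simp; omega) ?_ ?_ (by simp)
        · exact isWalk_append.2 ⟨z, h, ⟨hstA, hsrc, rfl⟩⟩
        · rw [visits_append]
          refine List.Nodup.append hnd (by simp) ?_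
          intro a ha hb
          have : a = dstE E st := by simpa using hb
          exact hw (this ▸ ha)
    · -- no extension: the endpoint z is a leaf of the last slot
      push_neg at hD
      obtain ⟨l₀, stl, rfl⟩ := List.eq_nil_or_concat l |>.resolve_left hlne
      rw [List.concat_eq_append] at h hnd hD
      obtain ⟨v, hv1, hv2⟩ := isWalk_append.1 h
      have hdst : dstE E stl = z := hv2.2.2
      have hstlA : stl.1 ∈ A := hv2.1
      refine ⟨stl.1, hstlA, z, ?_, ?_⟩
      · rcases stl with ⟨s, o⟩
        cases o
        · left; exact hdst ▸ rfl
        · right; exact hdst ▸ rfl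
      · intro s' hs' hne
        constructor <;> intro hzeq
        · have := hD (s', true) hs' (by simp [srcE, hzeq])
          have hmem : (s' : S) ∈ slots l₀ := by
            simpa [hne] using this
          obtain ⟨st', hst', hfst⟩ := List.mem_map.1 hmem
          -- z is an endpoint of st', so z ∈ visits of the l₀-walk; but z is last
          have hz1 : z = srcE E st' ∨ z = dstE E st' := by
            have := pair_eq_of_slot (E := E) (st := (s', true)) (st' := st') hfst.symm
            simpa [srcE, hzeq] using this
          have hzvis : z ∈ visits E x l₀ := by
            rcases hz1 with h' | h'
            · exact h' ▸ step_src_mem hv1 hst'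
            · exact h' ▸ step_dst_mem hv1 hst'
          have : z ∉ visits E x l₀ := by
            have hnd' := hnd
            rw [visits_append] at hnd'
            have := List.disjoint_of_nodup_append hnd'
            intro hmem'
            exact this hmem' (by simp [hdst])
          exact this hzvis
        · have := hD (s', false) hs' (by simp [srcE, hzeq])
          have hmem : (s' : S) ∈ slots l₀ := by
            simpa [hne] using this
          obtain ⟨st', hst', hfst⟩ := List.mem_map.1 hmem
          have hz1 : z = srcE E st' ∨ z = dstE E st' := by
            have := pair_eq_of_slot (E := E) (st := (s', false)) (st' := st') hfst.symm
            simpa [srcE, hzeq] using this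
          have hzvis : z ∈ visits E x l₀ := by
            rcases hz1 with h' | h'
            · exact h' ▸ step_src_mem hv1 hst'
            · exact h' ▸ step_dst_mem hv1 hst'
          have : z ∉ visits E x l₀ := by
            have hnd' := hnd
            rw [visits_append] at hnd'
            have := List.disjoint_of_nodup_append hnd'
            intro hmem'
            exact this hmem' (by simp [hdst])
          exact this hzvis

lemma exists_leaf [Fintype V] (hrev : ∀ x, ¬ Rev E A x) (hA : A.Nonempty) :
    ∃ s ∈ A, ∃ zf, (zf = (E s).1 ∨ zf = (E s).2) ∧
      ∀ s' ∈ A, s' ≠ s → zf ≠ (E s').1 ∧ zf ≠ (E s').2 := by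
  obtain ⟨s₀, hs₀⟩ := hA
  have hloop := no_loop hrev hs₀
  refine search hrev (Fintype.card V) (E s₀).1 (E s₀).2 [(s₀, true)] (by simp) ?_ ?_ (by simp)
  · exact ⟨hs₀, rfl, rfl⟩
  · simpa [srcE, dstE] using hloop

/-- Lemma F: with no revisiting trails, a nonempty slot family is a forest. -/
lemma forest_bound [Fintype V] :
    ∀ A : Finset S, (∀ x, ¬ Rev E A x) → A.Nonempty → A.card + 1 ≤ (touched E A).card := by
  suffices H : ∀ (N : ℕ) (A : Finset S), A.card ≤ N → (∀ x, ¬ Rev E A x) → A.Nonempty →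
      A.card + 1 ≤ (touched E A).card by
    exact fun A h1 h2 => H A.card A le_rfl h1 h2
  intro N
  induction N with
  | zero =>
    intro A hcard hrev hA
    exact absurd (Finset.card_eq_zero.1 (Nat.le_zero.1 hcard)) (Finset.nonempty_iff_ne_empty.1 hA)
  | succ N ih =>
  intro A hcard hrev hA
  obtain ⟨s, hs, zf, hzf, hleaf⟩ := exists_leaf hrev hA
  set A' := A.erase s with hA'def
  have hcard : A'.card = A.card - 1 := Finset.card_erase_of_mem hs
  have hApos : 1 ≤ A.card := Finset.card_pos.2 hA
  have hzt : zf ∈ touched E A := by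
    rcases hzf with h | h
    · exact h ▸ (mem_touched_of_slot hs).1
    · exact h ▸ (mem_touched_of_slot hs).2
  have hsub : touched E A' ⊆ (touched E A).erase zf := by
    intro v hv
    obtain ⟨s', hs', hv'⟩ := Finset.mem_biUnion.1 hv
    have hs'A : s' ∈ A := Finset.mem_of_mem_erase hs'
    have hs'ne : s' ≠ s := Finset.ne_of_mem_erase hs'
    have hne := hleaf s' hs'A hs'ne
    refine Finset.mem_erase.2 ⟨?_, touched_mono (Finset.erase_subset _ _) hv⟩
    intro hveq
    subst hveq
    simp at hv'
    rcases hv' with h' | h'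
    · exact hne.1 h'
    · exact hne.2 h'
  by_cases hA'ne : A'.Nonempty
  · have hrev' : ∀ x, ¬ Rev E A' x := fun x hx => hrev x (hx.mono (Finset.erase_subset _ _))
    have := ih A' (by omega) hrev' hA'ne
    have h2 : (touched E A').card ≤ (touched E A).card - 1 := by
      have := Finset.card_le_card hsub
      have h3 : ((touched E A).erase zf).card = (touched E A).card - 1 :=
        Finset.card_erase_of_mem hzt
      omega
    have h4 : 1 ≤ (touched E A).card := Finset.card_pos.2 ⟨zf, hzt⟩
    omega
  · -- A = {s}
    have hAs : A = {s} := by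
      apply Finset.eq_singleton_iff_unique_mem.2
      refine ⟨hs, fun t ht => ?_⟩
      by_contra hne
      exact (Finset.nonempty_iff_ne_empty.2 (by
        intro hemp
        have : t ∈ A' := Finset.mem_erase.2 ⟨hne, ht⟩
        simp [hemp] at this) : A'.Nonempty) |> hA'ne
    have hloop := no_loop hrev hs
    have : ({(E s).1, (E s).2} : Finset V) ⊆ touched E A := by
      intro v hv
      exact Finset.mem_biUnion.2 ⟨s, hs, hv⟩
    have h2 : ({(E s).1, (E s).2} : Finset V).card = 2 := by
      rw [Finset.card_insert_of_notMem (by simpa using hloop), Finset.card_singleton]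
    have h3 := Finset.card_le_card this
    have h5 : A.card = 1 := by rw [hAs]; simp
    omega

lemma exists_rev [Fintype V] (hcard : (touched E A).card ≤ A.card) (hA : A.Nonempty) :
    ∃ x, Rev E A x := by
  by_contra h
  push_neg at h
  have := forest_bound A (fun x => by simpa using h x) hA
  omega

lemma same_slot_pair {st st' : S × Bool} (hs : st.1 = st'.1) :
    (srcE E st = srcE E st' ∧ dstE E st = dstE E st') ∨
    (srcE E st = dstE E st' ∧ dstE E st = srcE E st') := by
  cases st with | mk a o =>
  cases st' with | mk a' o' =>
  simp only at hs
  subst hs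
  cases o <;> cases o' <;> simp [srcE, dstE]

lemma isWalk_erase {s : S} {a b : V} {l : List (S × Bool)} (h : IsWalk E A a l b)
    (hns : ∀ st ∈ l, st.1 ≠ s) : IsWalk E (A.erase s) a l b := by
  induction l generalizing a with
  | nil => exact h
  | cons st l ih =>
    exact ⟨Finset.mem_erase.2 ⟨hns st (by simp), h.1⟩, h.2.1,
      ih h.2.2 (fun st' h' => hns st' (by simp [h']))⟩

lemma rev_head_src_touched {x : V} (h : Rev E A x) : ∃ st : S × Bool, st.1 ∈ A ∧ srcE E st = x := by
  obtain ⟨p, y, l, hp, hl, hlne, _⟩ := h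
  cases p with
  | nil =>
    obtain ⟨st, l', rfl⟩ := List.exists_cons_of_ne_nil hlne
    exact ⟨st, hl.1, by rw [hl.2.1, ← hp]⟩
  | cons st p' => exact ⟨st, hp.1, hp.2.1⟩

lemma G2 [Fintype V] [Fintype S] :
    ∀ B : Finset S, (touched E B).card + 1 ≤ B.card →
      ∃ s ∈ B, Rev E (B.erase s) (E s).1 ∧ Rev E (B.erase s) (E s).2 := by
  suffices H : ∀ (N : ℕ) (B : Finset S), B.card ≤ N → (touched E B).card + 1 ≤ B.card →
      ∃ s ∈ B, Rev E (B.erase s) (E s).1 ∧ Rev E (B.erase s) (E s).2 by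
    exact fun B hB => H B.card B le_rfl hB
  intro N
  induction N with
  | zero => intro B hc hB; omega
  | succ N ih =>
  intro B hcard hB
  classical
  have hBne : B.Nonempty := Finset.card_pos.1 (by omega)
  obtain ⟨z, hz⟩ := exists_rev (E := E) (by omega) hBne
  set R : Finset V := Finset.univ.filter (fun v => Reach E B z v) with hRdef
  have hmemR : ∀ v, v ∈ R ↔ Reach E B z v := by
    intro v; simp [hRdef]
  have hzR : z ∈ R := (hmemR z).2 (Reach.refl z)
  have hstepR : ∀ (st : S × Bool), st.1 ∈ B → srcE E st ∈ R → dstE E st ∈ R := by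
    intro st hst hsrc
    exact (hmemR _).2 (((hmemR _).1 hsrc).trans ⟨[st], ⟨hst, rfl, rfl⟩⟩)
  have hclosure : ∀ s ∈ B, ((E s).1 ∈ R ∨ (E s).2 ∈ R) → ((E s).1 ∈ R ∧ (E s).2 ∈ R) := by
    intro s hsB h
    rcases h with h | h
    · exact ⟨h, hstepR (s, true) hsB h⟩
    · exact ⟨hstepR (s, false) hsB h, h⟩
  set B1 := B.filter (fun s => (E s).1 ∈ R ∨ (E s).2 ∈ R) with hB1def
  set B2 := B \ B1 with hB2def
  have hB1sub : B1 ⊆ B := Finset.filter_subset _ _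
  have hwalkB1 : ∀ (l : List (S × Bool)) (a b : V), a ∈ R → IsWalk E B a l b →
      IsWalk E B1 a l b ∧ b ∈ R := by
    intro l
    induction l with
    | nil => intro a b ha h; exact ⟨h, h ▸ ha⟩
    | cons st l ihl =>
      intro a b ha h
      have hsrc : srcE E st = a := h.2.1
      have hstB1 : st.1 ∈ B1 := by
        refine Finset.mem_filter.2 ⟨h.1, ?_⟩
        rcases st with ⟨s, o⟩
        cases o
        · right; exact (by simpa [srcE] using hsrc) ▸ ha
        · left; exact (by simpa [srcE] using hsrc) ▸ ha
      have hdstR : dstE E st ∈ R := hstepR st h.1 (hsrc ▸ ha)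
      obtain ⟨hw, hb⟩ := ihl _ _ hdstR h.2.2
      exact ⟨⟨hstB1, hsrc, hw⟩, hb⟩
  have hrevB1 : Rev E B1 z := by
    obtain ⟨p, y, l, hp, hl, hlne, hnd⟩ := hz
    obtain ⟨h1, hyR⟩ := hwalkB1 p z y hzR hp
    obtain ⟨h2, _⟩ := hwalkB1 l y y hyR hl
    exact ⟨p, y, l, h1, h2, hlne, hnd⟩
  have htB1R : touched E B1 ⊆ R := by
    intro v hv
    obtain ⟨s, hs, hv⟩ := Finset.mem_biUnion.1 hv
    obtain ⟨hsB, hcond⟩ := Finset.mem_filter.1 hs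
    have := hclosure s hsB hcond
    simp at hv
    rcases hv with rfl | rfl
    · exact this.1
    · exact this.2
  have hB1ne : B1.Nonempty := by
    obtain ⟨st, hst, _⟩ := rev_head_src_touched hrevB1
    exact ⟨st.1, hst⟩
  have hB12 : B1.card + B2.card = B.card := by
    have hset := Finset.card_sdiff_of_subset hB1sub
    rw [← hB2def] at hset
    have h2 := Finset.card_le_card hB1sub
    omega
  by_cases hB2big : (touched E B2).card + 1 ≤ B2.card
  · have hB2le : B2.card ≤ N := by
      have := Finset.card_pos.2 hB1ne
      omega
    obtain ⟨s, hsB2, h1, h2⟩ := ih B2 hB2le hB2big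
    have hsB : s ∈ B := (Finset.sdiff_subset) hsB2
    have hsub2 : B2.erase s ⊆ B.erase s := by
      intro t ht
      obtain ⟨htne, ht2⟩ := Finset.mem_erase.1 ht
      exact Finset.mem_erase.2 ⟨htne, Finset.sdiff_subset ht2⟩
    exact ⟨s, hsB, h1.mono hsub2, h2.mono hsub2⟩
  · have hB2small : B2.card ≤ (touched E B2).card := by omega
    have hdisj : Disjoint (touched E B1) (touched E B2) := by
      rw [Finset.disjoint_left]
      intro v hv1 hv2
      have hvR : v ∈ R := htB1R hv1
      obtain ⟨s, hs2, hv⟩ := Finset.mem_biUnion.1 hv2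
      obtain ⟨hsB, hsnB1⟩ := Finset.mem_sdiff.1 hs2
      have hcond : ¬ ((E s).1 ∈ R ∨ (E s).2 ∈ R) := by
        intro hc
        exact hsnB1 (Finset.mem_filter.2 ⟨hsB, hc⟩)
      simp at hv
      rcases hv with rfl | rfl
      · exact hcond (Or.inl hvR)
      · exact hcond (Or.inr hvR)
    have hunion : touched E B = touched E B1 ∪ touched E B2 := by
      ext v
      simp only [touched, Finset.mem_union, Finset.mem_biUnion]
      constructor
      · rintro ⟨s', hs', hv⟩
        by_cases h' : s' ∈ B1
        · exact Or.inl ⟨s', h', hv⟩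
        · exact Or.inr ⟨s', Finset.mem_sdiff.2 ⟨hs', h'⟩, hv⟩
      · rintro (⟨s', hs', hv⟩ | ⟨s', hs', hv⟩)
        · exact ⟨s', hB1sub hs', hv⟩
        · exact ⟨s', (Finset.mem_sdiff.1 hs').1, hv⟩
    have hcards : (touched E B1).card + (touched E B2).card = (touched E B).card := by
      rw [hunion, Finset.card_union_of_disjoint hdisj]
    have hkey : (touched E B1).card + 1 ≤ B1.card := by omega
    -- find a closed trail in B1 and remove one of its slots
    obtain ⟨p, y, l, hp, hl, hlne, hnd⟩ := hrevB1
    obtain ⟨st0, l', rfl⟩ := List.exists_cons_of_ne_nil hlne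
    set s := st0.1 with hsdef
    have hsB1 : s ∈ B1 := hl.1
    set B' := B1.erase s with hB'def
    have hsrc0 : srcE E st0 = y := hl.2.1
    have hndl : (slots (st0 :: l')).Nodup := (List.nodup_append.1 (by simpa using hnd)).2.1
    have hst0notl' : ∀ st ∈ l', st.1 ≠ s := by
      intro st hst heq
      have hnc := (List.nodup_cons.1 (by simpa using hndl : (st0.1 :: slots l').Nodup)).1
      rw [hsdef] at heq
      exact hnc (heq ▸ List.mem_map.2 ⟨st, hst, rfl⟩)
    have hwalkB' : IsWalk E B' (dstE E st0) l' y := isWalk_erase hl.2.2 hst0notl'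
    have hreach_vy : Reach E B' (dstE E st0) y := ⟨l', hwalkB'⟩
    have hyR : y ∈ R := (hwalkB1 p z y hzR (hp.mono hB1sub)).2
    have hvR : dstE E st0 ∈ R := hstepR st0 (hB1sub hsB1) (hsrc0 ▸ hyR)
    have htB'sub : touched E B' ⊆ touched E B1 := touched_mono (Finset.erase_subset _ _)
    have htB1pos : 1 ≤ (touched E B1).card :=
      Finset.card_pos.2 ⟨(E s).1, (mem_touched_of_slot hsB1).1⟩
    have hB'card : B'.card = B1.card - 1 := Finset.card_erase_of_mem hsB1
    have hB'ne : B'.Nonempty := Finset.card_pos.1 (by omega)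
    obtain ⟨x, hx⟩ := exists_rev (E := E) (A := B')
      (by have := Finset.card_le_card htB'sub; omega) hB'ne
    -- mutual connectivity within B' for R
    have hdetour : ∀ (l₀ : List (S × Bool)) (a b : V), IsWalk E B1 a l₀ b → Reach E B' a b := by
      intro l₀
      induction l₀ with
      | nil => intro a b h; exact h ▸ Reach.refl a
      | cons st l₀ ihl =>
        intro a b h
        have hrest : Reach E B' (dstE E st) b := ihl _ _ h.2.2
        by_cases hss : st.1 = s
        · have hor := same_slot_pair (E := E) (st := st) (st' := st0) hss
          have hstep : Reach E B' a (dstE E st) := by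
            rcases hor with ⟨h1, h2⟩ | ⟨h1, h2⟩
            · rw [← h.2.1, h1, h2, hsrc0]
              exact hreach_vy.symm
            · rw [← h.2.1, h1, h2, hsrc0]
              exact hreach_vy
          exact hstep.trans hrest
        · refine Reach.trans ?_ hrest
          exact ⟨[st], ⟨Finset.mem_erase.2 ⟨hss, h.1⟩, h.2.1, rfl⟩⟩
    have hreachB' : ∀ v ∈ R, Reach E B' z v := by
      intro v hv
      obtain ⟨l₀, hw⟩ := (hmemR v).1 hv
      exact hdetour l₀ z v ((hwalkB1 l₀ z v hzR hw).1)
    have hxR : x ∈ R := by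
      obtain ⟨st, hst, hsrc⟩ := rev_head_src_touched hx
      exact htB1R (hsrc ▸ src_mem_touched (Finset.mem_of_mem_erase hst))
    obtain ⟨hc1R, hc2R⟩ := hclosure s (hB1sub hsB1) (Finset.mem_filter.1 hsB1).2
    have hcx : Reach E B' (E s).1 x := ((hreachB' _ hc1R).symm).trans (hreachB' _ hxR)
    have hdx : Reach E B' (E s).2 x := ((hreachB' _ hc2R).symm).trans (hreachB' _ hxR)
    have hsub' : B' ⊆ B.erase s := by
      intro t ht
      obtain ⟨htne, ht1⟩ := Finset.mem_erase.1 ht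
      exact Finset.mem_erase.2 ⟨htne, hB1sub ht1⟩
    exact ⟨s, hB1sub hsB1, (hx.reach hcx).mono hsub', (hx.reach hdx).mono hsub'⟩

/-- Global dichotomy: either the marked vertex has a revisiting trail, or some
slot can be re-plugged onto `j` with both endpoints still having revisiting
trails avoiding that slot. -/
lemma global_dichotomy [Fintype V] [Fintype S] (j : V)
    (hcard : Fintype.card V ≤ Fintype.card S) (hS : Nonempty S) :
    Rev E Finset.univ j ∨
      ∃ s : S, Rev E (Finset.univ.erase s) (E s).1 ∧ Rev E (Finset.univ.erase s) (E s).2 := by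
  classical
  by_cases h1 : ∃ x, Rev E Finset.univ x ∧ Reach E Finset.univ j x
  · obtain ⟨x, hx, hr⟩ := h1
    exact Or.inl (hx.reach hr)
  · push_neg at h1
    have htle : (touched E (Finset.univ : Finset S)).card ≤ (Finset.univ : Finset S).card := by
      have h2 : (touched E (Finset.univ : Finset S)).card ≤ Fintype.card V := by
        simpa [Finset.card_univ] using
          Finset.card_le_card (Finset.subset_univ (touched E (Finset.univ : Finset S)))
      simpa [Finset.card_univ] using h2.trans hcard
    obtain ⟨x0, hx0⟩ := exists_rev (E := E) (A := (Finset.univ : Finset S)) htle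
      ⟨hS.some, Finset.mem_univ _⟩
    set R : Finset V := Finset.univ.filter (fun v => Reach E Finset.univ j v) with hRdef
    have hmemR : ∀ v, v ∈ R ↔ Reach E Finset.univ j v := by
      intro v; simp [hRdef]
    have hjR : j ∈ R := (hmemR j).2 (Reach.refl j)
    have hR1 : 1 ≤ R.card := Finset.card_pos.2 ⟨j, hjR⟩
    have hstepR : ∀ (st : S × Bool), srcE E st ∈ R → dstE E st ∈ R := by
      intro st hsrc
      exact (hmemR _).2 (((hmemR _).1 hsrc).trans ⟨[st], ⟨Finset.mem_univ _, rfl, rfl⟩⟩)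
    have hclosure : ∀ s : S, ((E s).1 ∈ R ∨ (E s).2 ∈ R) → ((E s).1 ∈ R ∧ (E s).2 ∈ R) := by
      intro s h
      rcases h with h | h
      · exact ⟨h, hstepR (s, true) h⟩
      · exact ⟨hstepR (s, false) h, h⟩
    set Ain : Finset S := Finset.univ.filter (fun s => (E s).1 ∈ R ∨ (E s).2 ∈ R) with hAindef
    have htAin : touched E Ain ⊆ R := by
      intro v hv
      obtain ⟨s, hs, hv⟩ := Finset.mem_biUnion.1 hv
      have := hclosure s (Finset.mem_filter.1 hs).2
      simp at hv
      rcases hv with rfl | rfl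
      · exact this.1
      · exact this.2
    have hnorev : ∀ x, ¬ Rev E Ain x := by
      intro x hx
      obtain ⟨st, hst, hsrc⟩ := rev_head_src_touched hx
      have hxR : x ∈ R := htAin (hsrc ▸ src_mem_touched hst)
      exact h1 x (hx.mono (Finset.subset_univ _)) ((hmemR x).1 hxR)
    have hAinle : Ain.card + 1 ≤ R.card := by
      rcases Finset.eq_empty_or_nonempty Ain with hemp | hne
      · rw [hemp]; simpa using hR1
      · exact (forest_bound Ain hnorev hne).trans (Finset.card_le_card htAin)
    set B : Finset S := Finset.univ \ Ain with hBdef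
    have hBcard : B.card = Fintype.card S - Ain.card := by
      rw [hBdef, Finset.card_sdiff_of_subset (Finset.subset_univ _), Finset.card_univ]
    have htB : touched E B ⊆ Finset.univ \ R := by
      intro v hv
      obtain ⟨s, hs, hv⟩ := Finset.mem_biUnion.1 hv
      obtain ⟨-, hsnA⟩ := Finset.mem_sdiff.1 hs
      have hcond : ¬ ((E s).1 ∈ R ∨ (E s).2 ∈ R) := by
        intro hc
        exact hsnA (Finset.mem_filter.2 ⟨Finset.mem_univ _, hc⟩)
      refine Finset.mem_sdiff.2 ⟨Finset.mem_univ _, ?_⟩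
      simp at hv
      rcases hv with rfl | rfl
      · exact fun h => hcond (Or.inl h)
      · exact fun h => hcond (Or.inr h)
    have htBcard : (touched E B).card ≤ Fintype.card V - R.card := by
      have := Finset.card_le_card htB
      rwa [Finset.card_sdiff_of_subset (Finset.subset_univ _), Finset.card_univ] at this
    have hRV : R.card ≤ Fintype.card V := by
      simpa [Finset.card_univ] using Finset.card_le_card (Finset.subset_univ R)
    have hAinS : Ain.card ≤ Fintype.card S := by
      simpa [Finset.card_univ] using Finset.card_le_card (Finset.subset_univ Ain)
    obtain ⟨s, hsB, hc1, hc2⟩ := G2 (E := E) B (by omega)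
    have hsub : B.erase s ⊆ Finset.univ.erase s := by
      intro t ht
      exact Finset.mem_erase.2 ⟨(Finset.mem_erase.1 ht).1, Finset.mem_univ _⟩
    exact Or.inr ⟨s, hc1.mono hsub, hc2.mono hsub⟩

end DivWalk




namespace DivTensor

variable {n m q : ℕ}

/-! ### Pairs of blocks as edges -/

def pairAt (b : Fin m → Blk n) (s : Fin m × Bool) : Fin n × Fin n :=
  if s.2 then ((b s.1).2.2.1, (b s.1).2.2.2) else ((b s.1).1, (b s.1).2.1)

def updPair (b : Fin m → Blk n) (s : Fin m × Bool) (p : Fin n × Fin n) : Fin m → Blk n :=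
  Function.update b s.1
    (if s.2 then ((b s.1).1, (b s.1).2.1, p.1, p.2)
     else (p.1, p.2, (b s.1).2.2.1, (b s.1).2.2.2))

lemma updPair_apply_same (b : Fin m → Blk n) (s : Fin m × Bool) (p : Fin n × Fin n) :
    (updPair b s p) s.1 =
      (if s.2 then ((b s.1).1, (b s.1).2.1, p.1, p.2)
       else (p.1, p.2, (b s.1).2.2.1, (b s.1).2.2.2)) := by
  simp [updPair]

lemma updPair_apply_other (b : Fin m → Blk n) (s : Fin m × Bool) (p : Fin n × Fin n)
    {t : Fin m} (ht : t ≠ s.1) : (updPair b s p) t = b t := by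
  simp [updPair, Function.update_of_ne ht]

lemma pairAt_updPair_same (b : Fin m → Blk n) (s : Fin m × Bool) (p : Fin n × Fin n) :
    pairAt (updPair b s p) s = p := by
  rcases s with ⟨t, side⟩
  cases side <;> simp [pairAt, updPair]

lemma pairAt_updPair_other (b : Fin m → Blk n) (s : Fin m × Bool) (p : Fin n × Fin n)
    {s' : Fin m × Bool} (h : s' ≠ s) : pairAt (updPair b s p) s' = pairAt b s' := by
  rcases s with ⟨t, side⟩
  rcases s' with ⟨t', side'⟩
  by_cases ht : t' = t
  · subst ht
    have hside : side' ≠ side := fun hs => h (by rw [hs])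
    cases side <;> cases side' <;> simp at hside <;> simp [pairAt, updPair]
  · simp [pairAt, updPair, Function.update_of_ne ht]

lemma updPair_self (b : Fin m → Blk n) (s : Fin m × Bool) :
    updPair b s (pairAt b s) = b := by
  rcases s with ⟨t, side⟩
  cases side <;> simp [pairAt, updPair] <;> exact Function.update_eq_self t b

lemma updPair_updPair (b : Fin m → Blk n) (s : Fin m × Bool) (p p' : Fin n × Fin n) :
    updPair (updPair b s p) s p' = updPair b s p' := by
  rcases s with ⟨t, side⟩
  cases side <;>
    simp [updPair, Function.update_idem]

section Identities

variable {T : (Fin (q + 1) → Fin n) → (Fin m → Blk n) → ℝ} (hT : MemDiv T)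
include hT

/-- Swapping the two entries of a pair. -/
lemma T_updPair_comm (J : Fin (q+1) → Fin n) (b : Fin m → Blk n) (s : Fin m × Bool)
    (u v : Fin n) : T J (updPair b s (u, v)) = T J (updPair b s (v, u)) := by
  rcases s with ⟨t, side⟩
  cases side
  · have hb' : (updPair b (⟨t, false⟩ : Fin m × Bool) (v, u)) t
        = (v, u, (b t).2.2.1, (b t).2.2.2) := by simp [updPair]
    have h := hT.symAB J (updPair b (⟨t, false⟩ : Fin m × Bool) (v, u)) t
    rw [hb'] at h
    have hupd : Function.update (updPair b (⟨t, false⟩ : Fin m × Bool) (v, u)) t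
        (swapAB (v, u, (b t).2.2.1, (b t).2.2.2))
        = updPair b (⟨t, false⟩ : Fin m × Bool) (u, v) := by
      simp [swapAB, updPair, Function.update_idem]
    rw [hupd] at h
    exact h
  · have hb' : (updPair b (⟨t, true⟩ : Fin m × Bool) (v, u)) t
        = ((b t).1, (b t).2.1, v, u) := by simp [updPair]
    have h := hT.symCD J (updPair b (⟨t, true⟩ : Fin m × Bool) (v, u)) t
    rw [hb'] at h
    have hupd : Function.update (updPair b (⟨t, true⟩ : Fin m × Bool) (v, u)) t
        (swapCD ((b t).1, (b t).2.1, v, u))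
        = updPair b (⟨t, true⟩ : Fin m × Bool) (u, v) := by
      simp [swapCD, updPair, Function.update_idem]
    rw [hupd] at h
    exact h

lemma T_updPair_swapSide (J : Fin (q+1) → Fin n) (b : Fin m → Blk n) (t : Fin m)
    (p : Fin n × Fin n) :
    T J (updPair (Function.update b t (swapPairs (b t))) (⟨t, true⟩ : Fin m × Bool) p)
      = T J (updPair b (⟨t, false⟩ : Fin m × Bool) p) := by
  have h1 : updPair (Function.update b t (swapPairs (b t))) (⟨t, true⟩ : Fin m × Bool) p
      = Function.update b t ((b t).2.2.1, (b t).2.2.2, p.1, p.2) := by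
    simp [updPair, swapPairs, Function.update_idem]
  have h2 := hT.symPairs J (updPair b (⟨t, false⟩ : Fin m × Bool) p) t
  have h3 : Function.update (updPair b (⟨t, false⟩ : Fin m × Bool) p) t
      (swapPairs ((updPair b (⟨t, false⟩ : Fin m × Bool) p) t))
      = Function.update b t ((b t).2.2.1, (b t).2.2.2, p.1, p.2) := by
    have : (updPair b (⟨t, false⟩ : Fin m × Bool) p) t
        = (p.1, p.2, (b t).2.2.1, (b t).2.2.2) := by simp [updPair]
    rw [this]
    simp [swapPairs, updPair, Function.update_idem]
  rw [h1, ← h3]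
  exact h2

lemma T_symPairs' (J : Fin (q+1) → Fin n) (b : Fin m → Blk n) (t : Fin m) :
    T J (Function.update b t (swapPairs (b t))) = T J b := hT.symPairs J b t

/-- The cyclic identity in terms of slots. -/
lemma T_cyc_slot (J0 : Fin q → Fin n) (jp c d : Fin n) (b : Fin m → Blk n)
    (s : Fin m × Bool) (h : pairAt b s = (c, d)) :
    T (Fin.snoc J0 jp) b + T (Fin.snoc J0 d) (updPair b s (jp, c))
      + T (Fin.snoc J0 c) (updPair b s (d, jp)) = 0 := by
  rcases s with ⟨t, side⟩
  cases side
  · -- conjugate by swapPairs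
    set bsw := Function.update b t (swapPairs (b t)) with hbsw
    have hpair : pairAt bsw (⟨t, true⟩ : Fin m × Bool) = (c, d) := by
      have : pairAt bsw (⟨t, true⟩ : Fin m × Bool)
          = pairAt b (⟨t, false⟩ : Fin m × Bool) := by
        simp [pairAt, hbsw, swapPairs]
      rw [this]; exact h
    have hc : (bsw t).2.2.1 = c := by rw [show ((bsw t).2.2.1) = (pairAt bsw (⟨t,true⟩ : Fin m × Bool)).1 from rfl, hpair]
    have hd : (bsw t).2.2.2 = d := by rw [show ((bsw t).2.2.2) = (pairAt bsw (⟨t,true⟩ : Fin m × Bool)).2 from rfl, hpair]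
    have hcyc := hT.cyc J0 jp bsw t
    rw [hc, hd] at hcyc
    have e1 : Function.update bsw t ((bsw t).1, (bsw t).2.1, jp, c)
        = updPair bsw (⟨t, true⟩ : Fin m × Bool) (jp, c) := by
      simp [updPair, hc]
    have e2 : Function.update bsw t ((bsw t).1, (bsw t).2.1, d, jp)
        = updPair bsw (⟨t, true⟩ : Fin m × Bool) (d, jp) := by
      simp [updPair, hd]
    rw [e1, e2] at hcyc
    rw [T_updPair_swapSide hT, T_updPair_swapSide hT, T_symPairs' hT] at hcyc
    exact hcyc
  · have hc : (b t).2.2.1 = c := by rw [show ((b t).2.2.1) = (pairAt b (⟨t,true⟩ : Fin m × Bool)).1 from rfl, h]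
    have hd : (b t).2.2.2 = d := by rw [show ((b t).2.2.2) = (pairAt b (⟨t,true⟩ : Fin m × Bool)).2 from rfl, h]
    have hcyc := hT.cyc J0 jp b t
    rw [hc, hd] at hcyc
    have e1 : Function.update b t ((b t).1, (b t).2.1, jp, c)
        = updPair b (⟨t, true⟩ : Fin m × Bool) (jp, c) := by
      simp [updPair, hc]
    have e2 : Function.update b t ((b t).1, (b t).2.1, d, jp)
        = updPair b (⟨t, true⟩ : Fin m × Bool) (d, jp) := by
      simp [updPair, hd]
    rw [e1, e2] at hcyc
    exact hcyc

/-- Degenerate cyclic identity: a loop at the free index kills the component. -/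
lemma tO2 (J0 : Fin q → Fin n) (x : Fin n) (b : Fin m → Blk n) (s : Fin m × Bool)
    (h : pairAt b s = (x, x)) : T (Fin.snoc J0 x) b = 0 := by
  have hcyc := T_cyc_slot hT J0 x x x b s h
  have hself : updPair b s (x, x) = b := by
    have := updPair_self b s
    rw [h] at this
    exact this
  rw [hself] at hcyc
  linarith

/-- Claim A: walking one step. -/
lemma tA2 (J0 : Fin q → Fin n) (x v : Fin n) (b : Fin m → Blk n) (s : Fin m × Bool)
    (hor : pairAt b s = (x, v) ∨ pairAt b s = (v, x))
    (h0 : T (Fin.snoc J0 v) (updPair b s (x, x)) = 0) :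
    T (Fin.snoc J0 x) b = 0 := by
  have main : ∀ b' : Fin m → Blk n, pairAt b' s = (v, x) →
      T (Fin.snoc J0 v) (updPair b' s (x, x)) = 0 → T (Fin.snoc J0 x) b' = 0 := by
    intro b' hp h0'
    have hcyc := T_cyc_slot hT J0 x v x b' s hp
    have h1 : T (Fin.snoc J0 x) (updPair b' s (x, v)) = T (Fin.snoc J0 x) b' := by
      rw [T_updPair_comm hT]
      rw [show ((v, x) : Fin n × Fin n) = pairAt b' s from hp.symm, updPair_self]
    rw [h1, h0'] at hcyc
    linarith
  rcases hor with hp | hp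
  · -- flip the pair first
    set b₃ := updPair b s (v, x) with hb₃
    have h4 : T (Fin.snoc J0 x) b = T (Fin.snoc J0 x) b₃ := by
      rw [hb₃, ← T_updPair_comm hT]
      rw [show ((x, v) : Fin n × Fin n) = pairAt b s from hp.symm, updPair_self]
    rw [h4]
    refine main b₃ (pairAt_updPair_same _ _ _) ?_
    rw [hb₃, updPair_updPair]
    exact h0
  · exact main b hp h0

end Identities

section Walks

open DivWalk

variable {T : (Fin (q + 1) → Fin n) → (Fin m → Blk n) → ℝ} (hT : MemDiv T)
include hT

lemma Pten (J0 : Fin q → Fin n) :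
    ∀ (w : List ((Fin m × Bool) × Bool)) (b : Fin m → Blk n) (x y : Fin n),
    IsWalk (pairAt b) Finset.univ x w y → (slots w).Nodup →
    ∀ s₀, s₀ ∉ slots w → pairAt b s₀ = (y, y) → T (Fin.snoc J0 x) b = 0 := by
  intro w
  induction w with
  | nil =>
    intro b x y hw _ s₀ _ hs₀
    have hxy : x = y := hw
    subst hxy
    exact tO2 hT J0 x b s₀ hs₀
  | cons st w' ih =>
    intro b x y hw hnd s₀ hs₀ hloop
    have hsrc : srcE (pairAt b) st = x := hw.2.1
    set v := dstE (pairAt b) st with hv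
    have hor : pairAt b st.1 = (x, v) ∨ pairAt b st.1 = (v, x) := by
      rcases st with ⟨s, o⟩
      cases o
      · right
        have h1 : (pairAt b s).2 = x := by simpa [srcE] using hsrc
        have h2 : (pairAt b s).1 = v := by simp [hv, dstE]
        rw [← h1, ← h2]
      · left
        have h1 : (pairAt b s).1 = x := by simpa [srcE] using hsrc
        have h2 : (pairAt b s).2 = v := by simp [hv, dstE]
        rw [← h1, ← h2]
    have hndc : (st.1 :: slots w').Nodup := by simpa using hnd
    have hne : ∀ st' ∈ w', st'.1 ≠ st.1 := by
      intro st' hst' heq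
      exact (List.nodup_cons.1 hndc).1 (heq ▸ List.mem_map.2 ⟨st', hst', rfl⟩)
    set b' := updPair b st.1 (x, x) with hb'
    refine tA2 hT J0 x v b st.1 hor ?_
    have hagree : ∀ st' ∈ w', pairAt b' st'.1 = pairAt b st'.1 := by
      intro st' hst'
      exact pairAt_updPair_other b st.1 (x, x) (hne st' hst')
    have hs₀ne : s₀ ≠ st.1 := by
      intro heq
      exact hs₀ (by simp [heq])
    refine ih b' v y ?_ ?_ s₀ ?_ ?_
    · exact (hw.2.2).congr (fun st' hst' => hagree st' hst')
    · exact (List.nodup_cons.1 hndc).2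
    · intro hmem
      exact hs₀ (by simp [hmem])
    · rw [pairAt_updPair_other b st.1 (x, x) hs₀ne]
      exact hloop

lemma Qten (J0 : Fin q → Fin n) (b : Fin m → Blk n) (x : Fin n)
    (h : Rev (pairAt b) Finset.univ x) : T (Fin.snoc J0 x) b = 0 := by
  obtain ⟨p, y, l, hp, hl, hlne, hnd⟩ := h
  induction p generalizing b x with
  | nil =>
    have hxy : x = y := hp
    subst hxy
    obtain ⟨st, l', rfl⟩ := List.exists_cons_of_ne_nil hlne
    have hsrc : srcE (pairAt b) st = x := hl.2.1
    set v := dstE (pairAt b) st with hv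
    have hor : pairAt b st.1 = (x, v) ∨ pairAt b st.1 = (v, x) := by
      rcases st with ⟨s, o⟩
      cases o
      · right
        have h1 : (pairAt b s).2 = x := by simpa [srcE] using hsrc
        have h2 : (pairAt b s).1 = v := by simp [hv, dstE]
        rw [← h1, ← h2]
      · left
        have h1 : (pairAt b s).1 = x := by simpa [srcE] using hsrc
        have h2 : (pairAt b s).2 = v := by simp [hv, dstE]
        rw [← h1, ← h2]
    have hndc : (st.1 :: slots l').Nodup := by simpa using hnd
    have hne : ∀ st' ∈ l', st'.1 ≠ st.1 := by
      intro st' hst' heq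
      exact (List.nodup_cons.1 hndc).1 (heq ▸ List.mem_map.2 ⟨st', hst', rfl⟩)
    set b' := updPair b st.1 (x, x) with hb'
    refine tA2 hT J0 x v b st.1 hor ?_
    refine Pten hT J0 l' b' v x ?_ ?_ st.1 ?_ ?_
    · exact (hl.2.2).congr (fun st' hst' => pairAt_updPair_other b st.1 (x, x) (hne st' hst'))
    · exact (List.nodup_cons.1 hndc).2
    · intro hmem
      obtain ⟨st', hst', heq⟩ := List.mem_map.1 hmem
      exact hne st' hst' heq
    · exact pairAt_updPair_same b st.1 (x, x)
  | cons st p' ih =>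
    have hsrc : srcE (pairAt b) st = x := hp.2.1
    set v := dstE (pairAt b) st with hv
    have hor : pairAt b st.1 = (x, v) ∨ pairAt b st.1 = (v, x) := by
      rcases st with ⟨s, o⟩
      cases o
      · right
        have h1 : (pairAt b s).2 = x := by simpa [srcE] using hsrc
        have h2 : (pairAt b s).1 = v := by simp [hv, dstE]
        rw [← h1, ← h2]
      · left
        have h1 : (pairAt b s).1 = x := by simpa [srcE] using hsrc
        have h2 : (pairAt b s).2 = v := by simp [hv, dstE]
        rw [← h1, ← h2]
    have hndc : (st.1 :: slots (p' ++ l)).Nodup := by simpa using hnd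
    have hne : ∀ st' , st' ∈ p' ∨ st' ∈ l → st'.1 ≠ st.1 := by
      intro st' hst' heq
      refine (List.nodup_cons.1 hndc).1 (heq ▸ ?_)
      rw [slots_append, List.mem_append]
      rcases hst' with h' | h'
      · exact Or.inl (List.mem_map.2 ⟨st', h', rfl⟩)
      · exact Or.inr (List.mem_map.2 ⟨st', h', rfl⟩)
    set b' := updPair b st.1 (x, x) with hb'
    refine tA2 hT J0 x v b st.1 hor ?_
    have hagree' : ∀ st' ∈ p', pairAt b' st'.1 = pairAt b st'.1 := by
      intro st' hst'
      exact pairAt_updPair_other b st.1 (x, x) (hne st' (Or.inl hst'))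
    have hagreel : ∀ st' ∈ l, pairAt b' st'.1 = pairAt b st'.1 := by
      intro st' hst'
      exact pairAt_updPair_other b st.1 (x, x) (hne st' (Or.inr hst'))
    exact ih b' v (hp.2.2.congr hagree') (hl.congr hagreel) ((List.nodup_cons.1 hndc).2)

end Walks

end DivTensor


namespace DivTensor

/-- For `m ≥ n/2` (i.e. `n ≤ 2m`), the space
`Div^m ⊆ ⊗^p ℝⁿ ⊗ S^m N²` is zero: every component of every element
vanishes. -/
theorem div_eq_zero_of_half_dim_le {n m q : ℕ} (hm : n ≤ 2 * m)
    (T : (Fin (q + 1) → Fin n) → (Fin m → Blk n) → ℝ) (hT : MemDiv T) :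
    ∀ (J : Fin (q + 1) → Fin n) (b : Fin m → Blk n), T J b = 0 := by
  intro J b
  classical
  set j := J (Fin.last q) with hj
  set J0 := Fin.init J with hJ0
  have hJ : Fin.snoc J0 j = J := Fin.snoc_init_self J
  have hn : 0 < n := j.pos
  have hm1 : 0 < m := by omega
  have hcard : Fintype.card (Fin n) ≤ Fintype.card (Fin m × Bool) := by
    simp [Fintype.card_prod]
    omega
  have hNE : Nonempty (Fin m × Bool) := ⟨(⟨0, hm1⟩, true)⟩
  rcases DivWalk.global_dichotomy (E := pairAt b) j hcard hNE with hrev | ⟨s, h1, h2⟩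
  · rw [← hJ]
    exact Qten hT J0 b j hrev
  · set c := (pairAt b s).1 with hc
    set d := (pairAt b s).2 with hd
    have hpair : pairAt b s = (c, d) := rfl
    have hcyc := T_cyc_slot hT J0 j c d b s hpair
    have e1 : T (Fin.snoc J0 d) (updPair b s (j, c)) = 0 := by
      refine Qten hT J0 _ d ?_
      refine DivWalk.Rev.mono (Finset.subset_univ _) (DivWalk.Rev.congr ?_ h2)
      intro s' hs'
      exact pairAt_updPair_other b s (j, c) (Finset.mem_erase.1 hs').1
    have e2 : T (Fin.snoc J0 c) (updPair b s (d, j)) = 0 := by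
      refine Qten hT J0 _ c ?_
      refine DivWalk.Rev.mono (Finset.subset_univ _) (DivWalk.Rev.congr ?_ h1)
      intro s' hs'
      exact pairAt_updPair_other b s (d, j) (Finset.mem_erase.1 hs').1
    rw [← hJ]
    linarith

end DivTensor
end
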